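/- arXiv:2505.21892 — 5 statements merged into one kernel-verified Lean document; each statement's English description precedes it below -/
import Mathlib

section
/- Let $f: \mathbb{R}^d \to \mathbb{R}$ be differentiable with $H$-Lipschitz gradient, and let $p \propto \exp(-f)$ be a probability density. Then $\mathbb{E}_{x\sim p}[\|\nabla f(x)\|^2] \le Hd$. -/
open MeasureTheory Real

/-- Quadratic upper bound for a function with Lipschitz gradient. -/
theorem quad_bound' {E : Type*} [NormedAddCommGroup E] [InnerProductSpace ℝ E] [CompleteSpace E]
    (H : ℝ) (hH : 0 ≤ H) (f : E → ℝ) (hdiff : Differentiable ℝ f)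
    (hlip : LipschitzWith (Real.toNNReal H) (fun x => gradient f x))
    (x v : E) :
    f (x + v) ≤ f x + inner ℝ (gradient f x) v + H / 2 * ‖v‖ ^ 2 := by
  have hgrad : ∀ y w : E, (inner ℝ (gradient f y) w : ℝ) = fderiv ℝ f y w := by
    intro y w; simp [gradient, InnerProductSpace.toDual_apply_apply]
  set g : ℝ → ℝ := fun t => f (x + t • v) with hg
  have hderiv : ∀ t : ℝ, HasDerivAt g (inner ℝ (gradient f (x + t • v)) v : ℝ) t := by
    intro t
    have h1 : HasDerivAt (fun t : ℝ => x + t • v) v t := by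
      simpa using ((hasDerivAt_id t).smul_const v).const_add x
    have h2 := (hdiff (x + t • v)).hasFDerivAt.comp_hasDerivAt t h1
    rw [hgrad]
    exact h2
  have hcont : Continuous fun t : ℝ => (inner ℝ (gradient f (x + t • v)) v : ℝ) := by
    have : Continuous fun y : E => gradient f y := hlip.continuous
    exact (Continuous.inner (this.comp (by continuity)) continuous_const)
  have hftc : g 1 - g 0 = ∫ t in (0:ℝ)..1, (inner ℝ (gradient f (x + t • v)) v : ℝ) := by
    rw [intervalIntegral.integral_eq_sub_of_hasDerivAt (fun t _ => hderiv t)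
      (hcont.intervalIntegrable 0 1)]
  have hbound : ∫ t in (0:ℝ)..1, (inner ℝ (gradient f (x + t • v)) v : ℝ)
      ≤ ∫ t in (0:ℝ)..1, ((inner ℝ (gradient f x) v : ℝ) + H * t * ‖v‖ ^ 2) := by
    apply intervalIntegral.integral_mono_on (by norm_num)
      (hcont.intervalIntegrable 0 1)
      (by apply Continuous.intervalIntegrable; continuity)
    intro t ht
    have h1 : (inner ℝ (gradient f (x + t • v)) v : ℝ) - inner ℝ (gradient f x) v
        = inner ℝ (gradient f (x + t • v) - gradient f x) v := by
      rw [inner_sub_left]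
    have h2 : (inner ℝ (gradient f (x + t • v) - gradient f x) v : ℝ)
        ≤ ‖gradient f (x + t • v) - gradient f x‖ * ‖v‖ := by
      exact (real_inner_le_norm _ _)
    have h3 : ‖gradient f (x + t • v) - gradient f x‖ ≤ H * (t * ‖v‖) := by
      have := hlip.dist_le_mul (x + t • v) x
      simp only [dist_eq_norm, add_sub_cancel_left] at this
      calc ‖gradient f (x + t • v) - gradient f x‖ ≤ H.toNNReal * ‖t • v‖ := this
        _ ≤ H * (t * ‖v‖) := by
            rw [norm_smul, Real.norm_eq_abs, abs_of_nonneg ht.1]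
            exact mul_le_mul_of_nonneg_right (Real.coe_toNNReal H hH).le
              (mul_nonneg ht.1 (norm_nonneg v))
    nlinarith [norm_nonneg v, ht.1]
  have hint : ∫ t in (0:ℝ)..1, ((inner ℝ (gradient f x) v : ℝ) + H * t * ‖v‖ ^ 2)
      = inner ℝ (gradient f x) v + H / 2 * ‖v‖ ^ 2 := by
    rw [intervalIntegral.integral_add (by apply Continuous.intervalIntegrable; continuity)
      (by apply Continuous.intervalIntegrable; continuity)]
    have h2 : (∫ t in (0:ℝ)..1, H * t * ‖v‖ ^ 2) = H / 2 * ‖v‖ ^ 2 := by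
      have he : ∀ t : ℝ, H * t * ‖v‖ ^ 2 = (H * ‖v‖ ^ 2) * t := fun t => by ring
      simp_rw [he]
      rw [intervalIntegral.integral_const_mul, integral_id]; ring
    rw [h2]; simp
  have : g 1 = f (x + v) := by simp [hg]
  have h0 : g 0 = f x := by simp [hg]
  nlinarith [hftc, hbound, hint]

theorem cosh_aux (a : ℝ) (ha : 0 ≤ a) : 2 + a ^ 2 ≤ Real.exp a + Real.exp (-a) := by
  have hs : a / 2 ≤ Real.sinh (a / 2) := Real.self_le_sinh_iff.2 (by linarith)
  rw [Real.sinh_eq] at hs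
  have e1 : Real.exp (a / 2) * Real.exp (-(a / 2)) = 1 := by
    rw [← Real.exp_add]; simp
  have e2 : Real.exp (a / 2) * Real.exp (a / 2) = Real.exp a := by
    rw [← Real.exp_add]; ring_nf
  have e3 : Real.exp (-(a / 2)) * Real.exp (-(a / 2)) = Real.exp (-a) := by
    rw [← Real.exp_add]; ring_nf
  nlinarith [hs, e1, e2, e3, Real.exp_pos (a / 2), Real.exp_pos (-(a / 2))]

theorem two_add_sq_le_exp (a : ℝ) : 2 + a ^ 2 ≤ Real.exp a + Real.exp (-a) := by
  rcases le_total 0 a with ha | ha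
  · exact cosh_aux a ha
  · have := cosh_aux (-a) (by linarith)
    simpa [neg_neg, add_comm] using this

set_option maxHeartbeats 2000000 in
/-- If `f : ℝ^d → ℝ` is differentiable with `H`-Lipschitz gradient and
`p ∝ exp (-f)` is a probability density, then `E_p[‖∇ f‖²] ≤ H d`. -/
theorem expected_sq_grad_le
    (d : ℕ) (H Z : ℝ) (hH : 0 < H) (hZ : 0 < Z)
    (f : EuclideanSpace ℝ (Fin d) → ℝ)
    (hdiff : Differentiable ℝ f)
    (hlip : LipschitzWith (Real.toNNReal H) (fun x => gradient f x))
    (hZint : ∫ x, Real.exp (-(f x)) = Z) :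
    ∫ x, ‖gradient f x‖ ^ 2 * (Real.exp (-(f x)) / Z) ≤ H * d := by
  set G : EuclideanSpace ℝ (Fin d) → EuclideanSpace ℝ (Fin d) := fun x => gradient f x with hG
  have hGcont : Continuous G := hlip.continuous
  have hfcont : Continuous f := hdiff.continuous
  -- integrability of the density
  have hInt : Integrable (fun x : EuclideanSpace ℝ (Fin d) => Real.exp (-(f x))) := by
    by_contra h
    rw [integral_undef h] at hZint
    exact absurd hZint.symm hZ.ne'
  have hlintZ : ∫⁻ x : EuclideanSpace ℝ (Fin d), ENNReal.ofReal (Real.exp (-(f x))) = ENNReal.ofReal Z := by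
    rw [← ofReal_integral_eq_lintegral_ofReal hInt
      (Filter.Eventually.of_forall fun x => (Real.exp_pos _).le), hZint]
  -- MGF bound
  have hMGF : ∀ v : EuclideanSpace ℝ (Fin d), ∫⁻ x : EuclideanSpace ℝ (Fin d), ENNReal.ofReal (Real.exp (-(f x) - inner ℝ (G x) v))
      ≤ ENNReal.ofReal (Z * Real.exp (H / 2 * ‖v‖ ^ 2)) := by
    intro v
    set c := H / 2 * ‖v‖ ^ 2 with hc
    have hmeas : Measurable fun x : EuclideanSpace ℝ (Fin d) => ENNReal.ofReal (Real.exp (-(f x) - inner ℝ (G x) v)) := by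
      apply ENNReal.measurable_ofReal.comp
      exact (Real.continuous_exp.comp
        ((hfcont.neg).sub ((Continuous.inner hGcont continuous_const)))).measurable
    have key : ∀ x : EuclideanSpace ℝ (Fin d), Real.exp (-(f x) - inner ℝ (G x) v) * Real.exp (-c)
        ≤ Real.exp (-(f (x + v))) := by
      intro x
      rw [← Real.exp_add]
      apply Real.exp_le_exp.2
      have := quad_bound' H hH.le f hdiff hlip x v
      rw [hc]; linarith
    have h1 : (∫⁻ x : EuclideanSpace ℝ (Fin d), ENNReal.ofReal (Real.exp (-(f x) - inner ℝ (G x) v)))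
        * ENNReal.ofReal (Real.exp (-c)) ≤ ENNReal.ofReal Z := by
      rw [← lintegral_mul_const _ hmeas]
      calc ∫⁻ x : EuclideanSpace ℝ (Fin d), ENNReal.ofReal (Real.exp (-(f x) - inner ℝ (G x) v))
            * ENNReal.ofReal (Real.exp (-c))
          = ∫⁻ x : EuclideanSpace ℝ (Fin d), ENNReal.ofReal (Real.exp (-(f x) - inner ℝ (G x) v) * Real.exp (-c)) := by
            simp_rw [ENNReal.ofReal_mul (Real.exp_pos _).le]
        _ ≤ ∫⁻ x : EuclideanSpace ℝ (Fin d), ENNReal.ofReal (Real.exp (-(f (x + v)))) :=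
            lintegral_mono fun x => ENNReal.ofReal_le_ofReal (key x)
        _ = ∫⁻ x : EuclideanSpace ℝ (Fin d), ENNReal.ofReal (Real.exp (-(f x))) :=
            lintegral_add_right_eq_self (fun x => ENNReal.ofReal (Real.exp (-(f x)))) v
        _ = ENNReal.ofReal Z := hlintZ
    have h2 := mul_le_mul_left h1 (ENNReal.ofReal (Real.exp c))
    calc ∫⁻ x : EuclideanSpace ℝ (Fin d), ENNReal.ofReal (Real.exp (-(f x) - inner ℝ (G x) v))
        = (∫⁻ x : EuclideanSpace ℝ (Fin d), ENNReal.ofReal (Real.exp (-(f x) - inner ℝ (G x) v)))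
          * (ENNReal.ofReal (Real.exp (-c)) * ENNReal.ofReal (Real.exp c)) := by
          rw [← ENNReal.ofReal_mul (Real.exp_pos _).le, ← Real.exp_add, neg_add_cancel,
            Real.exp_zero, ENNReal.ofReal_one, mul_one]
      _ = (∫⁻ x : EuclideanSpace ℝ (Fin d), ENNReal.ofReal (Real.exp (-(f x) - inner ℝ (G x) v)))
          * ENNReal.ofReal (Real.exp (-c)) * ENNReal.ofReal (Real.exp c) := by ring
      _ ≤ ENNReal.ofReal Z * ENNReal.ofReal (Real.exp c) := h2
      _ = ENNReal.ofReal (Z * Real.exp c) := (ENNReal.ofReal_mul hZ.le).symm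
  -- per-coordinate second moment bound
  have hcoord : ∀ i : Fin d, ∫⁻ x : EuclideanSpace ℝ (Fin d), ENNReal.ofReal ((G x i) ^ 2 * Real.exp (-(f x)))
      ≤ ENNReal.ofReal (Z * H) := by
    intro i
    set u : EuclideanSpace ℝ (Fin d) := EuclideanSpace.single i (1 : ℝ) with hu
    have hnormu : ‖u‖ = 1 := by simp [hu]
    have hinner : ∀ x : EuclideanSpace ℝ (Fin d), (inner ℝ (G x) u : ℝ) = G x i := by
      intro x; rw [hu, EuclideanSpace.inner_single_right]; simp
    set L := ∫⁻ x : EuclideanSpace ℝ (Fin d), ENNReal.ofReal ((G x i) ^ 2 * Real.exp (-(f x))) with hL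
    have hGi_cont : Continuous fun x : EuclideanSpace ℝ (Fin d) => G x i :=
      (continuous_apply i).comp ((PiLp.continuous_ofLp 2 _).comp hGcont)
    have hmeas2 : Measurable fun x : EuclideanSpace ℝ (Fin d) => ENNReal.ofReal ((G x i) ^ 2 * Real.exp (-(f x))) := by
      apply ENNReal.measurable_ofReal.comp
      exact ((hGi_cont.pow 2).mul (Real.continuous_exp.comp hfcont.neg)).measurable
    have hstep : ∀ s : ℝ, s ≠ 0 → L ≤ ENNReal.ofReal (Z * H * Real.exp (H / 2 * s ^ 2)) := by
      intro s hs
      have hs2 : (0:ℝ) < s ^ 2 := by positivity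
      -- pointwise cosh bound
      have hpt : ∀ x : EuclideanSpace ℝ (Fin d), ENNReal.ofReal (2 * Real.exp (-(f x)))
          + ENNReal.ofReal (s ^ 2) * ENNReal.ofReal ((G x i) ^ 2 * Real.exp (-(f x)))
          ≤ ENNReal.ofReal (Real.exp (-(f x) - inner ℝ (G x) (s • u)))
          + ENNReal.ofReal (Real.exp (-(f x) - inner ℝ (G x) ((-s) • u))) := by
        intro x
        rw [← ENNReal.ofReal_mul hs2.le, ← ENNReal.ofReal_add (by positivity) (by positivity),
          ← ENNReal.ofReal_add (Real.exp_pos _).le (Real.exp_pos _).le]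
        apply ENNReal.ofReal_le_ofReal
        have hcosh := two_add_sq_le_exp (s * G x i)
        have hep := Real.exp_pos (-(f x))
        have e1 : Real.exp (-(f x) - inner ℝ (G x) (s • u))
            = Real.exp (-(f x)) * Real.exp (-(s * G x i)) := by
          rw [← Real.exp_add, inner_smul_right, hinner]; ring_nf
        have e2 : Real.exp (-(f x) - inner ℝ (G x) ((-s) • u))
            = Real.exp (-(f x)) * Real.exp (s * G x i) := by
          rw [← Real.exp_add, inner_smul_right, hinner]; ring_nf
        rw [e1, e2]
        nlinarith [hcosh, hep.le, mul_le_mul_of_nonneg_left hcosh hep.le]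
      -- integrate
      have hnorm_su : ‖s • u‖ ^ 2 = s ^ 2 := by
        rw [norm_smul, hnormu, mul_one, Real.norm_eq_abs, sq_abs]
      have hnorm_nsu : ‖(-s) • u‖ ^ 2 = s ^ 2 := by
        rw [norm_smul, hnormu, mul_one, Real.norm_eq_abs, abs_neg, sq_abs]
      have hmeasA : Measurable fun x : EuclideanSpace ℝ (Fin d) => ENNReal.ofReal (2 * Real.exp (-(f x))) := by
        apply ENNReal.measurable_ofReal.comp
        exact (continuous_const.mul (Real.continuous_exp.comp hfcont.neg)).measurable
      have hint1 : ∫⁻ x : EuclideanSpace ℝ (Fin d), (ENNReal.ofReal (2 * Real.exp (-(f x)))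
            + ENNReal.ofReal (s ^ 2) * ENNReal.ofReal ((G x i) ^ 2 * Real.exp (-(f x))))
          = ENNReal.ofReal (2 * Z) + ENNReal.ofReal (s ^ 2) * L := by
        rw [lintegral_add_left hmeasA, lintegral_const_mul _ hmeas2]
        congr 1
        · have he2 : ∀ x : EuclideanSpace ℝ (Fin d), ENNReal.ofReal (2 * Real.exp (-(f x)))
              = 2 * ENNReal.ofReal (Real.exp (-(f x))) := by
            intro x
            rw [ENNReal.ofReal_mul (by norm_num : (0:ℝ) ≤ 2)]
            norm_num
          simp_rw [he2]
          have hm0 : Measurable fun x : EuclideanSpace ℝ (Fin d) =>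
              ENNReal.ofReal (Real.exp (-(f x))) :=
            ENNReal.measurable_ofReal.comp ((Real.continuous_exp.comp hfcont.neg)).measurable
          rw [lintegral_const_mul _ hm0, hlintZ,
            ENNReal.ofReal_mul (by norm_num : (0:ℝ) ≤ 2)]
          norm_num
      have hmeasB : Measurable fun x : EuclideanSpace ℝ (Fin d) =>
          ENNReal.ofReal (Real.exp (-(f x) - inner ℝ (G x) (s • u))) := by
        apply ENNReal.measurable_ofReal.comp
        exact (Real.continuous_exp.comp
          ((hfcont.neg).sub (Continuous.inner hGcont continuous_const))).measurable
      have hsum : ENNReal.ofReal (2 * Z) + ENNReal.ofReal (s ^ 2) * L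
          ≤ ENNReal.ofReal (Z * Real.exp (H / 2 * s ^ 2))
            + ENNReal.ofReal (Z * Real.exp (H / 2 * s ^ 2)) := by
        rw [← hint1]
        calc ∫⁻ x : EuclideanSpace ℝ (Fin d), (ENNReal.ofReal (2 * Real.exp (-(f x)))
              + ENNReal.ofReal (s ^ 2) * ENNReal.ofReal ((G x i) ^ 2 * Real.exp (-(f x))))
            ≤ ∫⁻ x : EuclideanSpace ℝ (Fin d), (ENNReal.ofReal (Real.exp (-(f x) - inner ℝ (G x) (s • u)))
              + ENNReal.ofReal (Real.exp (-(f x) - inner ℝ (G x) ((-s) • u)))) :=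
              lintegral_mono hpt
          _ = (∫⁻ x : EuclideanSpace ℝ (Fin d), ENNReal.ofReal (Real.exp (-(f x) - inner ℝ (G x) (s • u))))
              + ∫⁻ x : EuclideanSpace ℝ (Fin d), ENNReal.ofReal (Real.exp (-(f x) - inner ℝ (G x) ((-s) • u))) :=
              lintegral_add_left hmeasB _
          _ ≤ _ := by
              apply add_le_add
              · have := hMGF (s • u); rwa [hnorm_su] at this
              · have := hMGF ((-s) • u); rwa [hnorm_nsu] at this
      -- cancel and divide
      have hexp1 : (1:ℝ) ≤ Real.exp (H / 2 * s ^ 2) := by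
        rw [Real.one_le_exp_iff]; positivity
      have hsplit : ENNReal.ofReal (Z * Real.exp (H / 2 * s ^ 2))
            + ENNReal.ofReal (Z * Real.exp (H / 2 * s ^ 2))
          = ENNReal.ofReal (2 * Z * (Real.exp (H / 2 * s ^ 2) - 1)) + ENNReal.ofReal (2 * Z) := by
        rw [← ENNReal.ofReal_add (mul_nonneg hZ.le (Real.exp_pos _).le)
            (mul_nonneg hZ.le (Real.exp_pos _).le),
          ← ENNReal.ofReal_add (by nlinarith : (0:ℝ) ≤ 2 * Z * (Real.exp (H / 2 * s ^ 2) - 1))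
            (by linarith : (0:ℝ) ≤ 2 * Z)]
        congr 1; ring
      rw [hsplit, add_comm (ENNReal.ofReal (2 * Z * _))] at hsum
      have hcancel : ENNReal.ofReal (s ^ 2) * L
          ≤ ENNReal.ofReal (2 * Z * (Real.exp (H / 2 * s ^ 2) - 1)) :=
        (ENNReal.add_le_add_iff_left ENNReal.ofReal_ne_top).1 hsum
      -- divide by s^2
      have hL2 : L ≤ ENNReal.ofReal (2 * Z * (Real.exp (H / 2 * s ^ 2) - 1) / s ^ 2) := by
        rw [← ENNReal.mul_le_mul_iff_right (a := ENNReal.ofReal (s ^ 2))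
          (by simp [ENNReal.ofReal_eq_zero]; exact hs) ENNReal.ofReal_ne_top]
        calc ENNReal.ofReal (s ^ 2) * L
            ≤ ENNReal.ofReal (2 * Z * (Real.exp (H / 2 * s ^ 2) - 1)) := hcancel
          _ = ENNReal.ofReal (s ^ 2) * ENNReal.ofReal
              (2 * Z * (Real.exp (H / 2 * s ^ 2) - 1) / s ^ 2) := by
              rw [← ENNReal.ofReal_mul hs2.le]
              congr 1
              field_simp
      refine hL2.trans (ENNReal.ofReal_le_ofReal ?_)
      -- 2Z(e^c - 1)/s² ≤ Z H e^c with c = H/2 s²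
      have hc1 : Real.exp (H / 2 * s ^ 2) - 1 ≤ H / 2 * s ^ 2 * Real.exp (H / 2 * s ^ 2) := by
        have h := Real.add_one_le_exp (-(H / 2 * s ^ 2))
        have hepos := Real.exp_pos (H / 2 * s ^ 2)
        have hm : Real.exp (-(H / 2 * s ^ 2)) * Real.exp (H / 2 * s ^ 2) = 1 := by
          rw [← Real.exp_add]; simp
        nlinarith
      rw [div_le_iff₀ hs2]
      nlinarith [Real.exp_pos (H / 2 * s ^ 2)]
    -- take the limit s → 0
    have hlim : ∀ r : ℝ, 1 < r → L ≤ ENNReal.ofReal (Z * H * r) := by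
      intro r hr
      have hlr : 0 < Real.log r := Real.log_pos hr
      set s := Real.sqrt (2 * Real.log r / H) with hsdef
      have hspos : 0 < s := Real.sqrt_pos.2 (by positivity)
      have hs2 : s ^ 2 = 2 * Real.log r / H := Real.sq_sqrt (by positivity)
      have hHne : H ≠ 0 := hH.ne'
      have : H / 2 * s ^ 2 = Real.log r := by rw [hs2]; field_simp
      have := hstep s hspos.ne'
      rwa [‹H / 2 * s ^ 2 = Real.log r›, Real.exp_log (by linarith)] at this
    have htend : Filter.Tendsto (fun r : ℝ => ENNReal.ofReal (Z * H * r))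
        (nhdsWithin 1 (Set.Ioi 1)) (nhds (ENNReal.ofReal (Z * H))) := by
      have h1 : Filter.Tendsto (fun r : ℝ => Z * H * r) (nhdsWithin 1 (Set.Ioi 1))
          (nhds (Z * H)) := by
        have h0 : Continuous fun r : ℝ => Z * H * r := by continuity
        have h2 := h0.tendsto (1:ℝ)
        simp only [mul_one] at h2
        exact h2.mono_left nhdsWithin_le_nhds
      exact (ENNReal.continuous_ofReal.tendsto _).comp h1
    refine ge_of_tendsto htend ?_
    filter_upwards [self_mem_nhdsWithin] with r hr
    exact hlim r hr
  -- sum over coordinates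
  have hnormsq : ∀ x : EuclideanSpace ℝ (Fin d), ‖G x‖ ^ 2 = ∑ i, (G x i) ^ 2 := by
    intro x
    rw [EuclideanSpace.norm_eq, Real.sq_sqrt (by positivity)]
    simp [sq_abs]
  have hsumbound : ∫⁻ x : EuclideanSpace ℝ (Fin d), ENNReal.ofReal (‖G x‖ ^ 2 * Real.exp (-(f x)))
      ≤ ENNReal.ofReal (Z * (H * d)) := by
    have heq : ∀ x : EuclideanSpace ℝ (Fin d), ENNReal.ofReal (‖G x‖ ^ 2 * Real.exp (-(f x)))
        = ∑ i, ENNReal.ofReal ((G x i) ^ 2 * Real.exp (-(f x))) := by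
      intro x
      rw [hnormsq, Finset.sum_mul, ENNReal.ofReal_sum_of_nonneg]
      intro i _
      positivity
    simp_rw [heq]
    rw [lintegral_finset_sum]
    · calc ∑ i, ∫⁻ x : EuclideanSpace ℝ (Fin d), ENNReal.ofReal ((G x i) ^ 2 * Real.exp (-(f x)))
          ≤ ∑ _i : Fin d, ENNReal.ofReal (Z * H) :=
            Finset.sum_le_sum fun i _ => hcoord i
        _ = d * ENNReal.ofReal (Z * H) := by
            rw [Finset.sum_const, Finset.card_univ, Fintype.card_fin, nsmul_eq_mul]
        _ = ENNReal.ofReal (Z * (H * d)) := by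
            rw [← ENNReal.ofReal_natCast d, ← ENNReal.ofReal_mul (by positivity)]
            congr 1; ring
    · intro i _
      apply ENNReal.measurable_ofReal.comp
      exact ((((continuous_apply i).comp ((PiLp.continuous_ofLp 2 _).comp hGcont)).pow 2).mul
        (Real.continuous_exp.comp hfcont.neg)).measurable
  -- conclude
  have hmeasF : AEStronglyMeasurable (fun x : EuclideanSpace ℝ (Fin d) => ‖G x‖ ^ 2 * Real.exp (-(f x))) volume :=
    (((hGcont.norm.pow 2).mul (Real.continuous_exp.comp hfcont.neg))).aestronglyMeasurable
  have hint_eq : ∫ x : EuclideanSpace ℝ (Fin d), ‖G x‖ ^ 2 * Real.exp (-(f x))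
      = (∫⁻ x : EuclideanSpace ℝ (Fin d), ENNReal.ofReal (‖G x‖ ^ 2 * Real.exp (-(f x)))).toReal := by
    rw [integral_eq_lintegral_of_nonneg_ae (Filter.Eventually.of_forall fun x => by positivity)
      hmeasF]
  have hfinal : ∫ x : EuclideanSpace ℝ (Fin d), ‖G x‖ ^ 2 * Real.exp (-(f x)) ≤ Z * (H * d) := by
    rw [hint_eq]
    calc (∫⁻ x : EuclideanSpace ℝ (Fin d), ENNReal.ofReal (‖G x‖ ^ 2 * Real.exp (-(f x)))).toReal
        ≤ (ENNReal.ofReal (Z * (H * d))).toReal :=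
          ENNReal.toReal_mono ENNReal.ofReal_ne_top hsumbound
      _ = Z * (H * d) := ENNReal.toReal_ofReal (mul_nonneg hZ.le (mul_nonneg hH.le (Nat.cast_nonneg d)))
  have : ∫ x : EuclideanSpace ℝ (Fin d), ‖G x‖ ^ 2 * (Real.exp (-(f x)) / Z)
      = (∫ x : EuclideanSpace ℝ (Fin d), ‖G x‖ ^ 2 * Real.exp (-(f x))) / Z := by
    simp_rw [← mul_div_assoc]
    rw [integral_div]
  rw [this]
  rw [div_le_iff₀ hZ]
  nlinarith [hfinal]
end

section
/- (Modified log-Sobolev inequality for the hypercube flip chain.) Let $q_\infty$ be the uniform distribution on $\{0,1\}^n$ and let $\mathcal{L}$ be the generator $\mathcal{L}[f](y) = \sum_{i=0}^{n-1} (f(y \oplus e_i) - f(y))$, where $y \oplus e_i$ flips bit $i$. For any positive function $f: \{0,1\}^n \to (0,\infty)$, $\mathrm{Ent}_{q_\infty}[f] \le \mathcal{E}(f, \ln f)$, where $\mathrm{Ent}_{q_\infty}[f] = \mathbb{E}_{q_\infty}[f \ln f] - \mathbb{E}_{q_\infty}[f]\ln\mathbb{E}_{q_\infty}[f]$ and $\mathcal{E}(f,g)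 = -\mathbb{E}_{q_\infty}[f\,\mathcal{L}g]$ is the Dirichlet form. -/
open Real

/-- Tangent-line bound for the log-sum inequality. -/
lemma mlsi_tangent {a b A B : ℝ} (ha : 0 < a) (hb : 0 < b) (hA : 0 < A) (hB : 0 < B) :
    a * (Real.log A - Real.log B) + (a - b * (A / B)) ≤ a * (Real.log a - Real.log b) := by
  have ht : 0 < a * B / (b * A) := by positivity
  have h := Real.one_sub_inv_le_log_of_pos ht
  have hlog : Real.log (a * B / (b * A))
      = (Real.log a - Real.log b) - (Real.log A - Real.log B) := by
    rw [Real.log_div (by positivity) (by positivity), Real.log_mul ha.ne' hB.ne',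
      Real.log_mul hb.ne' hA.ne']
    ring
  rw [hlog] at h
  have hinv : (a * B / (b * A))⁻¹ = b * A / (a * B) := by rw [inv_div]
  rw [hinv] at h
  have h2 := mul_le_mul_of_nonneg_left h ha.le
  have key : a * (1 - b * A / (a * B)) = a - b * (A / B) := by
    field_simp
  nlinarith [h2, key]

/-- Log-sum inequality, one-sided version. -/
lemma mlsi_logsum {ι : Type*} [Fintype ι] [Nonempty ι] (a b : ι → ℝ)
    (ha : ∀ i, 0 < a i) (hb : ∀ i, 0 < b i) :
    (∑ i, a i) * (Real.log (∑ i, a i) - Real.log (∑ i, b i))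
      ≤ ∑ i, a i * (Real.log (a i) - Real.log (b i)) := by
  set A := ∑ i, a i with hA'
  set B := ∑ i, b i with hB'
  have hA : 0 < A := Finset.sum_pos (fun i _ => ha i) Finset.univ_nonempty
  have hB : 0 < B := Finset.sum_pos (fun i _ => hb i) Finset.univ_nonempty
  have hptw : ∀ i ∈ Finset.univ,
      a i * (Real.log A - Real.log B) + (a i - b i * (A / B))
        ≤ a i * (Real.log (a i) - Real.log (b i)) :=
    fun i _ => mlsi_tangent (ha i) (hb i) hA hB
  have hsum := Finset.sum_le_sum hptw
  have hexpand : ∑ i, (a i * (Real.log A - Real.log B) + (a i - b i * (A / B)))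
      = A * (Real.log A - Real.log B) + (A - B * (A / B)) := by
    rw [Finset.sum_add_distrib, ← Finset.sum_mul, Finset.sum_sub_distrib, ← Finset.sum_mul]
  have hBA : B * (A / B) = A := by field_simp
  rw [hexpand, hBA] at hsum
  linarith

/-- Symmetrized log-sum inequality. -/
lemma mlsi_logsum_symm {ι : Type*} [Fintype ι] [Nonempty ι] (a b : ι → ℝ)
    (ha : ∀ i, 0 < a i) (hb : ∀ i, 0 < b i) :
    ((∑ i, a i) - (∑ i, b i)) * (Real.log (∑ i, a i) - Real.log (∑ i, b i))
      ≤ ∑ i, (a i - b i) * (Real.log (a i) - Real.log (b i)) := by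
  have h1 := mlsi_logsum a b ha hb
  have h2 := mlsi_logsum b a hb ha
  have hexp : ∑ i, (a i - b i) * (Real.log (a i) - Real.log (b i))
      = (∑ i, a i * (Real.log (a i) - Real.log (b i)))
        + ∑ i, b i * (Real.log (b i) - Real.log (a i)) := by
    rw [← Finset.sum_add_distrib]
    exact Finset.sum_congr rfl fun i _ => by ring
  rw [hexp]
  nlinarith [h1, h2]

/-- Two-point entropy bound. -/
lemma mlsi_two_point {A B : ℝ} (hA : 0 < A) (hB : 0 < B) :
    A * Real.log A + B * Real.log B - (A + B) * (Real.log (A + B) - Real.log 2)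
      ≤ (1 / 2) * ((A - B) * (Real.log A - Real.log B)) := by
  have hlog2 : Real.log ((A + B) / 2) = Real.log (A + B) - Real.log 2 :=
    Real.log_div (by positivity) two_ne_zero
  have hsq : Real.log (A * B) ≤ Real.log (((A + B) / 2) ^ 2) :=
    Real.log_le_log (by positivity) (by nlinarith [sq_nonneg (A - B)])
  rw [Real.log_mul hA.ne' hB.ne', Real.log_pow] at hsq
  have hmid : (Real.log A + Real.log B) / 2 ≤ Real.log (A + B) - Real.log 2 := by
    rw [← hlog2]; push_cast at hsq; linarith
  nlinarith [mul_le_mul_of_nonneg_left hmid (by positivity : (0:ℝ) ≤ A + B)]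

lemma mlsi_pair_nonneg {x y : ℝ} (hx : 0 < x) (hy : 0 < y) :
    0 ≤ (x - y) * (Real.log x - Real.log y) := by
  rcases le_total x y with h | h
  · have h2 := mul_nonneg (sub_nonneg.2 h) (sub_nonneg.2 (Real.log_le_log hx h))
    nlinarith [h2]
  · exact mul_nonneg (by linarith) (by linarith [Real.log_le_log hy h])

/-- Unnormalized MLSI on the hypercube, by induction on the dimension. -/
lemma mlsi_claim : ∀ (n : ℕ) (f : (Fin n → Bool) → ℝ), (∀ y, 0 < f y) →
    (∑ y, f y * Real.log (f y))
      - (∑ y, f y) * (Real.log (∑ y, f y) - n * Real.log 2)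
    ≤ ∑ y, ∑ i, f y * (Real.log (f y) - Real.log (f (Function.update y i (!(y i))))) := by
  intro n
  induction n with
  | zero =>
    intro f hf
    simp
  | succ n ih =>
    intro f hf
    -- split sums over the first coordinate
    have hsplit : ∀ g : (Fin (n + 1) → Bool) → ℝ,
        ∑ y, g y = (∑ z, g (Fin.cons false z)) + (∑ z, g (Fin.cons true z)) := by
      intro g
      have he := Fintype.sum_equiv (Fin.consEquiv (fun _ : Fin (n+1) => Bool)).symm g
        (fun p => g (Fin.cons p.1 p.2)) (fun y => by
          simp [Fin.consEquiv, Fin.cons_self_tail])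
      rw [he, Fintype.sum_prod_type, Fintype.sum_bool]
      exact add_comm _ _
    set f0 : (Fin n → Bool) → ℝ := fun z => f (Fin.cons false z) with hf0
    set f1 : (Fin n → Bool) → ℝ := fun z => f (Fin.cons true z) with hf1
    have h0 : ∀ z, 0 < f0 z := fun z => hf _
    have h1 : ∀ z, 0 < f1 z := fun z => hf _
    have hS0 : 0 < ∑ z, f0 z := Finset.sum_pos (fun z _ => h0 z) Finset.univ_nonempty
    have hS1 : 0 < ∑ z, f1 z := Finset.sum_pos (fun z _ => h1 z) Finset.univ_nonempty
    -- flip facts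
    have hflip0 : ∀ (b : Bool) (z : Fin n → Bool),
        Function.update (Fin.cons b z) 0 (!((Fin.cons b z : Fin (n+1) → Bool) 0))
          = (Fin.cons (!b) z : Fin (n+1) → Bool) := by
      intro b z
      rw [Fin.cons_zero, Fin.update_cons_zero]
    have hflipS : ∀ (b : Bool) (z : Fin n → Bool) (i : Fin n),
        Function.update (Fin.cons b z) i.succ (!((Fin.cons b z : Fin (n+1) → Bool) i.succ))
          = (Fin.cons b (Function.update z i (!(z i))) : Fin (n+1) → Bool) := by
      intro b z i
      rw [Fin.cons_succ, Fin.cons_update]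
    -- the inner sum at a point cons b z
    have hinner : ∀ (b : Bool) (z : Fin n → Bool),
        (∑ i : Fin (n+1), f (Fin.cons b z)
            * (Real.log (f (Fin.cons b z))
              - Real.log (f (Function.update (Fin.cons b z) i (!((Fin.cons b z : Fin (n+1) → Bool) i))))))
        = f (Fin.cons b z) * (Real.log (f (Fin.cons b z)) - Real.log (f (Fin.cons (!b) z : Fin (n+1) → Bool)))
          + ∑ i : Fin n, f (Fin.cons b z)
              * (Real.log (f (Fin.cons b z))
                - Real.log (f (Fin.cons b (Function.update z i (!(z i))) : Fin (n+1) → Bool))) := by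
      intro b z
      rw [Fin.sum_univ_succ, hflip0 b z]
      congr 1
      exact Finset.sum_congr rfl fun i _ => by rw [hflipS b z i]
    -- decompose RHS
    rw [hsplit (fun y => ∑ i, f y * (Real.log (f y) - Real.log (f (Function.update y i (!(y i)))))),
      hsplit (fun y => f y * Real.log (f y)), hsplit f]
    simp only [hinner]
    rw [Finset.sum_add_distrib, Finset.sum_add_distrib]
    have hIH0 := ih f0 h0
    have hIH1 := ih f1 h1
    have hC : ((∑ z, f0 z) - (∑ z, f1 z)) * (Real.log (∑ z, f0 z) - Real.log (∑ z, f1 z))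
        ≤ ∑ z, (f0 z - f1 z) * (Real.log (f0 z) - Real.log (f1 z)) :=
      mlsi_logsum_symm f0 f1 h0 h1
    have hCnn : 0 ≤ ∑ z, (f0 z - f1 z) * (Real.log (f0 z) - Real.log (f1 z)) :=
      Finset.sum_nonneg fun z _ => mlsi_pair_nonneg (h0 z) (h1 z)
    have hTP := mlsi_two_point hS0 hS1
    -- identify cross terms
    have hcross : (∑ z, f (Fin.cons false z)
          * (Real.log (f (Fin.cons false z)) - Real.log (f (Fin.cons (!false) z))))
        + (∑ z, f (Fin.cons true z)
          * (Real.log (f (Fin.cons true z)) - Real.log (f (Fin.cons (!true) z))))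
        = ∑ z, (f0 z - f1 z) * (Real.log (f0 z) - Real.log (f1 z)) := by
      rw [← Finset.sum_add_distrib]
      exact Finset.sum_congr rfl fun z _ => by simp only [hf0, hf1, Bool.not_false, Bool.not_true]; ring
    rw [add_add_add_comm, hcross]
    have hlogsum : Real.log ((∑ z, f0 z) + (∑ z, f1 z)) ≥ 0 ∨ True := Or.inr trivial
    push_cast
    nlinarith [hIH0, hIH1, hC, hCnn, hTP]

/-- Modified log-Sobolev inequality for the hypercube flip chain:
`Ent_{unif}[f] ≤ ℰ(f, ln f)` for every positive `f`. -/
theorem hypercube_mlsi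
    (n : ℕ) (f : (Fin n → Bool) → ℝ) (hf : ∀ y, 0 < f y)
    (flip : Fin n → (Fin n → Bool) → (Fin n → Bool))
    (hflip : ∀ i y, flip i y = Function.update y i (!(y i)))
    (L : ((Fin n → Bool) → ℝ) → ((Fin n → Bool) → ℝ))
    (hL : ∀ g y, L g y = ∑ i : Fin n, (g (flip i y) - g y))
    (E : ((Fin n → Bool) → ℝ) → ℝ)
    (hE : ∀ g : (Fin n → Bool) → ℝ,
      E g = (2 : ℝ) ^ (-(n : ℤ)) * ∑ y, g y)
    (Ent : ℝ) (hEnt : Ent = E (fun y => f y * Real.log (f y)) - E f * Real.log (E f))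
    (Dir : ℝ) (hDir : Dir = -(E (fun y => f y * L (fun z => Real.log (f z)) y))) :
    Ent ≤ Dir := by
  have hw : (0:ℝ) < (2 : ℝ) ^ (-(n : ℤ)) := by positivity
  set w : ℝ := (2 : ℝ) ^ (-(n : ℤ)) with hwdef
  have hS : 0 < ∑ y, f y := Finset.sum_pos (fun y _ => hf y) Finset.univ_nonempty
  have hT := mlsi_claim n f hf
  -- rewrite Dir
  have hDir' : Dir = w * ∑ y, ∑ i, f y * (Real.log (f y) - Real.log (f (Function.update y i (!(y i))))) := by
    rw [hDir, hE, ← mul_neg, ← Finset.sum_neg_distrib]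
    congr 1
    refine Finset.sum_congr rfl fun y _ => ?_
    rw [hL, Finset.mul_sum, ← Finset.sum_neg_distrib]
    refine Finset.sum_congr rfl fun i _ => ?_
    rw [hflip]
    ring
  -- rewrite Ent
  have hlogw : Real.log w = -(n * Real.log 2) := by
    rw [hwdef, Real.log_zpow]; push_cast; ring
  have hEnt' : Ent = w * ((∑ y, f y * Real.log (f y))
      - (∑ y, f y) * (Real.log (∑ y, f y) - n * Real.log 2)) := by
    rw [hEnt, hE, hE, Real.log_mul hw.ne' hS.ne', hlogw]
    ring
  rw [hEnt', hDir']
  exact mul_le_mul_of_nonneg_left hT hw.le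
end

section
/- (Tensorization/sub-additivity of entropy.) Let $X_1, \ldots, X_n$ be independent random variables taking values in a countable set $\mathcal{X}$, let $f: \mathcal{X}^n \to [0,\infty)$, and let $\Phi(x) = x \ln x$ (with $\Phi(0)=0$). Then $\mathbb{E}[\Phi(f(X_1,\ldots,X_n))] - \Phi(\mathbb{E}[f(X_1,\ldots,X_n)]) \le \sum_{i=1}^n \mathbb{E}\big[\mathbb{E}_{X_i}[\Phi(f)] - \Phi(\mathbb{E}_{X_i}[f])\big]$, where $\mathbb{E}_{X_i}$ denotes expectation over $X_i$ alone with the other variables fixed. -/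
open MeasureTheory Real

namespace EntTensor

noncomputable def phi (x : ℝ) : ℝ := x * Real.log x

lemma phi_def (x : ℝ) : phi x = x * Real.log x := rfl

lemma key_ineq {a c : ℝ} (ha : 0 ≤ a) (hc : 0 < c) :
    a - c ≤ a * Real.log a - a * Real.log c := by
  rcases ha.eq_or_lt with h | h
  · simp [← h, hc.le]
  · have h1 : Real.log (c / a) ≤ c / a - 1 := Real.log_le_sub_one_of_pos (div_pos hc h)
    have h2 : Real.log (c / a) = Real.log c - Real.log a := Real.log_div hc.ne' h.ne'
    have h3 : a * Real.log (c / a) ≤ a * (c / a - 1) :=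
      mul_le_mul_of_nonneg_left h1 ha
    rw [h2] at h3
    have h4 : a * (c / a - 1) = c - a := by field_simp
    nlinarith
  
lemma phi_ge {a : ℝ} (ha : 0 ≤ a) : a - 1 ≤ phi a := by
  have := key_ineq ha one_pos
  simpa [phi_def] using this

lemma phi_nonneg_arg {a : ℝ} : phi 0 = 0 := by simp [phi_def]

variable {α β : Type*} [MeasurableSpace α] [Countable α] [MeasurableSingletonClass α]
  [MeasurableSpace β] [Countable β] [MeasurableSingletonClass β]

/-- Jensen's inequality for `phi` on a probability space, by the tangent-line trick. -/
lemma phi_integral_le (σ : Measure β) [IsProbabilityMeasure σ] (u : β → ℝ)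
    (h0 : ∀ b, 0 ≤ u b) (hi : Integrable u σ)
    (hpi : Integrable (fun b => phi (u b)) σ) :
    phi (∫ b, u b ∂σ) ≤ ∫ b, phi (u b) ∂σ := by
  set c := ∫ b, u b ∂σ with hc
  have hc0 : 0 ≤ c := integral_nonneg h0
  rcases hc0.eq_or_lt with h | h
  · have hu0 : u =ᵐ[σ] 0 := (integral_eq_zero_iff_of_nonneg h0 hi).mp h.symm
    have : (fun b => phi (u b)) =ᵐ[σ] 0 := by
      filter_upwards [hu0] with b hb
      simp [hb, phi_def]
    rw [integral_congr_ae this]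
    simp [← h, phi_def]
  · have hpt : ∀ b, u b * Real.log c + (u b - c) ≤ phi (u b) := by
      intro b
      have := key_ineq (h0 b) h
      simp only [phi_def]
      nlinarith
    have hInt1 : Integrable (fun b => u b * Real.log c + (u b - c)) σ :=
      (hi.mul_const _).add (hi.sub (integrable_const c))
    have := integral_mono hInt1 hpi hpt
    calc phi c = c * Real.log c + (c - c) := by simp [phi_def]
      _ = ∫ b, (u b * Real.log c + (u b - c)) ∂σ := by
          rw [integral_add (f := fun b => u b * Real.log c)
              (g := fun b => u b - c) (hi.mul_const _) (hi.sub (integrable_const c)),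
            integral_mul_const, integral_sub hi (integrable_const c),
            integral_const]
          simp [← hc]
      _ ≤ ∫ b, phi (u b) ∂σ := this

/-- Integrability of `phi` of a marginal, by squeezing between integrable bounds. -/
lemma integrable_phi_marginal (ρ : Measure α) (σ : Measure β)
    [IsProbabilityMeasure ρ] [IsProbabilityMeasure σ]
    (G : α × β → ℝ) (h0 : ∀ p, 0 ≤ G p) (hGi : Integrable G (ρ.prod σ))
    (hpGi : Integrable (fun p => phi (G p)) (ρ.prod σ)) :
    Integrable (fun a => phi (∫ b, G (a, b) ∂σ)) ρ := by
  have hmeas : AEStronglyMeasurable (fun a => phi (∫ b, G (a, b) ∂σ)) ρ :=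
    (measurable_of_countable _).aestronglyMeasurable
  refine integrable_of_le_of_le hmeas ?_ ?_
    ((hGi.integral_prod_left).sub (integrable_const 1))
    hpGi.integral_prod_left
  · filter_upwards with a
    exact phi_ge (integral_nonneg fun b => h0 _)
  · filter_upwards [hGi.prod_right_ae, hpGi.prod_right_ae] with a h1 h2
    exact phi_integral_le σ _ (fun b => h0 _) h1 h2


section core
variable {α β : Type*} [MeasurableSpace α] [Countable α] [MeasurableSingletonClass α]
  [MeasurableSpace β] [Countable β] [MeasurableSingletonClass β]

/-- Core two-variable inequality: entropy of a marginal. -/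
lemma entA (ρ : Measure α) (σ : Measure β)
    [IsProbabilityMeasure ρ] [IsProbabilityMeasure σ]
    (F : α × β → ℝ) (h0 : ∀ p, 0 ≤ F p) (hFi : Integrable F (ρ.prod σ))
    (hpFi : Integrable (fun p => phi (F p)) (ρ.prod σ)) :
    (∫ a, phi (∫ b, F (a, b) ∂σ) ∂ρ) - phi (∫ p, F p ∂(ρ.prod σ))
      ≤ ∫ b, ((∫ a, phi (F (a, b)) ∂ρ) - phi (∫ a, F (a, b) ∂ρ)) ∂σ := by
  set h : α → ℝ := fun a => ∫ b, F (a, b) ∂σ with hh_def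
  set m : β → ℝ := fun b => ∫ a, F (a, b) ∂ρ with hm_def
  set E : ℝ := ∫ p, F p ∂(ρ.prod σ) with hE_def
  have h0' : ∀ a, 0 ≤ h a := fun a => integral_nonneg fun b => h0 _
  have m0' : ∀ b, 0 ≤ m b := fun b => integral_nonneg fun a => h0 _
  have hE0 : 0 ≤ E := integral_nonneg h0
  have hhi : Integrable h ρ := hFi.integral_prod_left
  have hmi : Integrable m σ := hFi.integral_prod_right
  have hGi : Integrable (fun b => ∫ a, phi (F (a, b)) ∂ρ) σ := hpFi.integral_prod_right
  have hFsw : Integrable (F ∘ Prod.swap) (σ.prod ρ) := hFi.swap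
  have hpFsw : Integrable ((fun p => phi (F p)) ∘ Prod.swap) (σ.prod ρ) := hpFi.swap
  have hphih : Integrable (fun a => phi (h a)) ρ :=
    integrable_phi_marginal ρ σ F h0 hFi hpFi
  have hphim : Integrable (fun b => phi (m b)) σ :=
    integrable_phi_marginal σ ρ (F ∘ Prod.swap) (fun p => h0 _) hFsw hpFsw
  have hEh : E = ∫ a, h a ∂ρ := integral_prod F hFi
  have hEm : E = ∫ b, m b ∂σ := integral_prod_symm F hFi
  -- rewrite the RHS
  have hRHS : ∫ b, ((∫ a, phi (F (a, b)) ∂ρ) - phi (m b)) ∂σ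
      = (∫ p, phi (F p) ∂(ρ.prod σ)) - ∫ b, phi (m b) ∂σ := by
    rw [integral_sub hGi hphim, integral_prod_symm _ hpFi]
  rw [show (∫ b, ((∫ a, phi (F (a, b)) ∂ρ) - phi (∫ a, F (a, b) ∂ρ)) ∂σ)
      = ∫ b, ((∫ a, phi (F (a, b)) ∂ρ) - phi (m b)) ∂σ from rfl, hRHS]
  rcases hE0.eq_or_lt with hE | hE
  · -- degenerate case: `F = 0` a.e.
    have hF0 : F =ᵐ[ρ.prod σ] 0 := (integral_eq_zero_iff_of_nonneg h0 hFi).mp hE.symm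
    have hF0' : ∀ᵐ p ∂(ρ.prod σ), F p = 0 := hF0
    have h1 : ∫ p, phi (F p) ∂(ρ.prod σ) = 0 := by
      rw [integral_congr_ae (g := fun _ => (0 : ℝ)) ?_, integral_zero]
      filter_upwards [hF0'] with p hp
      simp [hp, phi]
    have h2 : ∫ a, phi (h a) ∂ρ = 0 := by
      rw [integral_congr_ae (g := fun _ => (0 : ℝ)) ?_, integral_zero]
      filter_upwards [Measure.ae_ae_of_ae_prod hF0'] with a ha
      have hz : h a = 0 := by
        have := integral_congr_ae (g := fun _ => (0 : ℝ)) ha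
        simpa using this
      simp [hz, phi]
    have h3 : ∫ b, phi (m b) ∂σ = 0 := by
      rw [integral_congr_ae (g := fun _ => (0 : ℝ)) ?_, integral_zero]
      have hsw : ∀ᵐ b ∂σ, ∀ᵐ a ∂ρ, F (a, b) = 0 :=
        (Measure.ae_ae_comm (μ := ρ) (ν := σ) (p := fun a b => F (a, b) = 0)
          .of_discrete).mp (Measure.ae_ae_of_ae_prod hF0')
      filter_upwards [hsw] with b hb
      have hz : m b = 0 := by
        have := integral_congr_ae (g := fun _ => (0 : ℝ)) hb
        simpa using this
      simp [hz, phi]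
    rw [h1, h2, h3, ← hE]
    simp [phi]
  · -- main case: `E > 0`
    have hA : ∀ᵐ p ∂(ρ.prod σ), (0 < F p → 0 < h p.1) := by
      rw [Measure.ae_prod_iff_ae_ae .of_discrete]
      filter_upwards [hFi.prod_right_ae] with a hsec
      rcases (h0' a).eq_or_lt with hz | hp
      · have hz' : (fun b => F (a, b)) =ᵐ[σ] 0 :=
          (integral_eq_zero_iff_of_nonneg (fun b => h0 _) hsec).mp hz.symm
        filter_upwards [hz'] with b hb hF
        rw [show F (a, b) = 0 from hb] at hF
        exact absurd hF (lt_irrefl 0)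
      · exact Filter.Eventually.of_forall fun b _ => hp
    have hB : ∀ᵐ p ∂(ρ.prod σ), (0 < F p → 0 < m p.2) := by
      rw [Measure.ae_prod_iff_ae_ae .of_discrete,
        Measure.ae_ae_comm .of_discrete]
      filter_upwards [hFi.prod_left_ae] with b hsec
      rcases (m0' b).eq_or_lt with hz | hp
      · have hz' : (fun a => F (a, b)) =ᵐ[ρ] 0 :=
          (integral_eq_zero_iff_of_nonneg (fun a => h0 _) hsec).mp hz.symm
        filter_upwards [hz'] with a ha hF
        rw [show F (a, b) = 0 from ha] at hF
        exact absurd hF (lt_irrefl 0)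
      · exact Filter.Eventually.of_forall fun a _ => hp
    -- pointwise inequality
    have hptwise : ∀ᵐ p ∂(ρ.prod σ),
        F p - h p.1 * (m p.2 / E)
          ≤ phi (F p) - F p * Real.log (m p.2) - F p * Real.log (h p.1)
            + F p * Real.log E := by
      filter_upwards [hA, hB] with p hA1 hB1
      rcases (h0 p).eq_or_lt with hz | hp
      · have hnn : 0 ≤ h p.1 * (m p.2 / E) :=
          mul_nonneg (h0' _) (div_nonneg (m0' _) hE0)
        simp only [← hz, phi, zero_mul, mul_zero, Real.log_zero, sub_zero, zero_sub,
          add_zero]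
        linarith
      · have hhp := hA1 hp
        have hmp := hB1 hp
        have hc : 0 < h p.1 * (m p.2 / E) := by positivity
        have hkey := key_ineq hp.le hc
        have hlog : Real.log (h p.1 * (m p.2 / E))
            = Real.log (h p.1) + (Real.log (m p.2) - Real.log E) := by
          rw [Real.log_mul hhp.ne' (by positivity), Real.log_div hmp.ne' hE.ne']
        rw [hlog] at hkey
        simp only [phi]
        nlinarith
    -- integrability of the pieces
    have hI2 : Integrable (fun p : α × β => F p * Real.log (m p.2)) (ρ.prod σ) := by
      rw [integrable_prod_iff' (measurable_of_countable _).aestronglyMeasurable]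
      constructor
      · filter_upwards [hFi.prod_left_ae] with b hsec
        exact hsec.mul_const _
      · refine hphim.abs.congr ?_
        filter_upwards [hFi.prod_left_ae] with b hsec
        have hnorm : ∀ a, ‖F (a, b) * Real.log (m b)‖
            = F (a, b) * |Real.log (m b)| := fun a => by
          rw [norm_mul, Real.norm_eq_abs, Real.norm_eq_abs, abs_of_nonneg (h0 _)]
        simp only [hnorm]
        rw [integral_mul_const, show phi (m b) = m b * Real.log (m b) from rfl,
          abs_mul, abs_of_nonneg (m0' b)]
    have hI3 : Integrable (fun p : α × β => F p * Real.log (h p.1)) (ρ.prod σ) := by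
      rw [integrable_prod_iff (measurable_of_countable _).aestronglyMeasurable]
      constructor
      · filter_upwards [hFi.prod_right_ae] with a hsec
        exact hsec.mul_const _
      · refine hphih.abs.congr ?_
        filter_upwards [hFi.prod_right_ae] with a hsec
        have hnorm : ∀ b, ‖F (a, b) * Real.log (h a)‖
            = F (a, b) * |Real.log (h a)| := fun b => by
          rw [norm_mul, Real.norm_eq_abs, Real.norm_eq_abs, abs_of_nonneg (h0 _)]
        simp only [hnorm]
        rw [integral_mul_const, show phi (h a) = h a * Real.log (h a) from rfl,
          abs_mul, abs_of_nonneg (h0' a)]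
    have hI5 : Integrable (fun p : α × β => h p.1 * (m p.2 / E)) (ρ.prod σ) :=
      hhi.mul_prod (hmi.div_const E)
    have hI4 : Integrable (fun p : α × β => F p * Real.log E) (ρ.prod σ) :=
      hFi.mul_const _
    -- integrals of the pieces
    have hEq5 : ∫ p, h p.1 * (m p.2 / E) ∂(ρ.prod σ) = E := by
      rw [show (fun p : α × β => h p.1 * (m p.2 / E))
          = fun p : α × β => h p.1 * ((fun b => m b / E) p.2) from rfl]
      rw [integral_prod_mul h (fun b => m b / E), integral_div, ← hEm, ← hEh,
        div_self hE.ne']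
      ring
    have hEq2 : ∫ p, F p * Real.log (m p.2) ∂(ρ.prod σ) = ∫ b, phi (m b) ∂σ := by
      rw [integral_prod_symm _ hI2]
      refine integral_congr_ae ?_
      filter_upwards [hFi.prod_left_ae] with b hsec
      rw [integral_mul_const]
      rfl
    have hEq3 : ∫ p, F p * Real.log (h p.1) ∂(ρ.prod σ) = ∫ a, phi (h a) ∂ρ := by
      rw [integral_prod _ hI3]
      refine integral_congr_ae ?_
      filter_upwards [hFi.prod_right_ae] with a hsec
      rw [integral_mul_const]
      rfl
    have hEq4 : ∫ p, F p * Real.log E ∂(ρ.prod σ) = E * Real.log E := by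
      rw [integral_mul_const, ← hE_def]
    have hmono := integral_mono_ae
      (f := fun p : α × β => F p - h p.1 * (m p.2 / E))
      (g := fun p : α × β => phi (F p) - F p * Real.log (m p.2)
        - F p * Real.log (h p.1) + F p * Real.log E)
      (hFi.sub hI5) (((hpFi.sub hI2).sub hI3).add hI4) hptwise
    beta_reduce at hmono
    rw [integral_sub hFi hI5,
      integral_add (f := fun p : α × β => phi (F p) - F p * Real.log (m p.2)
          - F p * Real.log (h p.1)) (g := fun p : α × β => F p * Real.log E)
        ((hpFi.sub hI2).sub hI3) hI4,
      integral_sub (f := fun p : α × β => phi (F p) - F p * Real.log (m p.2))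
        (g := fun p : α × β => F p * Real.log (h p.1)) (hpFi.sub hI2) hI3,
      integral_sub (f := fun p : α × β => phi (F p))
        (g := fun p : α × β => F p * Real.log (m p.2)) hpFi hI2,
      hEq2, hEq3, hEq4, hEq5, ← hE_def] at hmono
    have hgoal : ∫ a, phi (∫ b, F (a, b) ∂σ) ∂ρ = ∫ a, phi (h a) ∂ρ := rfl
    have hphiE : phi E = E * Real.log E := rfl
    rw [hgoal, hphiE]
    linarith

end core

lemma mp_snd {α β : Type*} [MeasurableSpace α] [MeasurableSpace β]
    (μ : Measure α) (ν : Measure β) [IsProbabilityMeasure μ] [SFinite ν] :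
    MeasurePreserving Prod.snd (μ.prod ν) ν :=
  ⟨measurable_snd, by rw [Measure.map_snd_prod, measure_univ, one_smul]⟩

lemma integral_snd_prob {α β : Type*} [MeasurableSpace α] [MeasurableSpace β]
    [Countable β] [MeasurableSingletonClass β]
    (μ : Measure α) (ν : Measure β) [IsProbabilityMeasure μ] [SFinite ν]
    (g : β → ℝ) : ∫ p, g p.2 ∂(μ.prod ν) = ∫ b, g b ∂ν := by
  have h1 : ∫ b, g b ∂(Measure.map Prod.snd (μ.prod ν)) = ∫ p, g p.2 ∂(μ.prod ν) :=
    integral_map measurable_snd.aemeasurable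
      (measurable_of_countable g).aestronglyMeasurable
  rw [← h1, Measure.map_snd_prod, measure_univ, one_smul]

lemma integrable_comp_mp {μ : Measure α} {ν : Measure β} {T : α → β}
    (hT : MeasurePreserving T μ ν) (g : β → ℝ) (hg : Integrable g ν) :
    Integrable (fun a => g (T a)) μ :=
  (hT.integrable_comp (measurable_of_countable g).aestronglyMeasurable).mpr hg


section update
variable {𝒳 : Type*} [MeasurableSpace 𝒳] [Countable 𝒳] [MeasurableSingletonClass 𝒳]

lemma update_eq_symm_apply (n : ℕ) (i : Fin (n + 1)) (x : Fin (n + 1) → 𝒳) (w : 𝒳) :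
    Function.update x i w
      = (MeasurableEquiv.piFinSuccAbove (fun _ : Fin (n + 1) => 𝒳) i).symm
          (w, ((MeasurableEquiv.piFinSuccAbove (fun _ : Fin (n + 1) => 𝒳) i) x).2) := by
  set e := MeasurableEquiv.piFinSuccAbove (fun _ : Fin (n + 1) => 𝒳) i with he
  have : e (Function.update x i w) = (w, (e x).2) := by
    rw [he]
    simp only [MeasurableEquiv.piFinSuccAbove_apply]
    refine Prod.ext ?_ ?_
    · simp
    · funext j
      simp [Function.update_of_ne (Fin.succAbove_ne i j)]
  rw [← this, MeasurableEquiv.symm_apply_apply]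

lemma measurePreserving_update (n : ℕ) (μ : Fin (n + 1) → Measure 𝒳)
    [∀ i, IsProbabilityMeasure (μ i)] (i : Fin (n + 1)) :
    MeasurePreserving (fun q : (Fin (n + 1) → 𝒳) × 𝒳 => Function.update q.1 i q.2)
      ((Measure.pi μ).prod (μ i)) (Measure.pi μ) := by
  set e := MeasurableEquiv.piFinSuccAbove (fun _ : Fin (n + 1) => 𝒳) i with he
  have MPe : MeasurePreserving e (Measure.pi μ)
      ((μ i).prod (Measure.pi fun j => μ (i.succAbove j))) :=
    measurePreserving_piFinSuccAbove μ i
  have h1 : MeasurePreserving (fun x : Fin (n + 1) → 𝒳 => (e x).2) (Measure.pi μ)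
      (Measure.pi fun j => μ (i.succAbove j)) := (mp_snd _ _).comp MPe
  have h2 : MeasurePreserving
      (Prod.map (fun x : Fin (n + 1) → 𝒳 => (e x).2) (id : 𝒳 → 𝒳))
      ((Measure.pi μ).prod (μ i))
      ((Measure.pi fun j => μ (i.succAbove j)).prod (μ i)) :=
    h1.prod (MeasurePreserving.id _)
  have h3 := (Measure.measurePreserving_swap
    (μ := Measure.pi fun j => μ (i.succAbove j)) (ν := μ i)).comp h2
  have h4 := (MPe.symm e).comp h3
  have heq : (fun q : (Fin (n + 1) → 𝒳) × 𝒳 => Function.update q.1 i q.2)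
      = (⇑e.symm ∘ (Prod.swap ∘ Prod.map (fun x : Fin (n + 1) → 𝒳 => (e x).2) id)) := by
    funext q
    simp only [Function.comp_apply, Prod.map_apply, Prod.swap_prod_mk, id_eq]
    exact update_eq_symm_apply n i q.1 q.2
  rw [heq]
  exact h4

end update


theorem aux (𝒳 : Type*) [MeasurableSpace 𝒳] [Countable 𝒳] [MeasurableSingletonClass 𝒳] :
    ∀ (n : ℕ) (μ : Fin n → Measure 𝒳), (∀ i, IsProbabilityMeasure (μ i)) →
    ∀ (f : (Fin n → 𝒳) → ℝ), (∀ x, 0 ≤ f x) →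
    Integrable f (Measure.pi μ) → (Integrable (fun x => phi (f x)) (Measure.pi μ)) →
    (∫ x, phi (f x) ∂Measure.pi μ) - phi (∫ x, f x ∂Measure.pi μ)
      ≤ ∑ i, ∫ x, ((∫ y, phi (f (Function.update x i y)) ∂μ i)
            - phi (∫ y, f (Function.update x i y) ∂μ i)) ∂Measure.pi μ := by
  intro n
  induction n with
  | zero =>
    intro μ hμ f hf0 hfi hpfi
    haveI : ∀ i, IsProbabilityMeasure (μ i) := hμ
    simp [integral_unique, measure_univ]
  | succ n IH =>
    intro μ hμ f hf0 hfi hpfi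
    haveI : ∀ i, IsProbabilityMeasure (μ i) := hμ
    haveI hνP : ∀ j : Fin n, IsProbabilityMeasure ((fun j : Fin n => μ j.succ) j) :=
      fun j => hμ _
    set Pn : Measure (Fin n → 𝒳) := Measure.pi (fun j : Fin n => μ j.succ) with hPn_def
    haveI : IsProbabilityMeasure Pn := by rw [hPn_def]; infer_instance
    set P : Measure (Fin (n + 1) → 𝒳) := Measure.pi μ with hP_def
    haveI : IsProbabilityMeasure P := by rw [hP_def]; infer_instance
    set e := MeasurableEquiv.piFinSuccAbove (fun _ : Fin (n + 1) => 𝒳) 0 with he_def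
    have MP : MeasurePreserving e P ((μ 0).prod Pn) :=
      measurePreserving_piFinSuccAbove μ 0
    set F : 𝒳 × (Fin n → 𝒳) → ℝ := fun p => f (Fin.cons p.1 p.2) with hF_def
    have he_apply : ∀ x : Fin (n + 1) → 𝒳, e x = (x 0, fun j => x j.succ) := by
      intro x
      rw [he_def]
      simp only [MeasurableEquiv.piFinSuccAbove_apply, Fin.succAbove_zero]
      rfl
    have hfe : ∀ x, f x = F (e x) := by
      intro x
      rw [he_apply x, hF_def]
      exact congrArg f (Fin.cons_self_tail x).symm
    have hF0 : ∀ p, 0 ≤ F p := fun p => hf0 _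
    have hcomp : F ∘ e = f := funext fun x => (hfe x).symm
    have hFi : Integrable F ((μ 0).prod Pn) :=
      (MP.integrable_comp_emb e.measurableEmbedding).mp (hcomp.symm ▸ hfi)
    have hpcomp : (fun p => phi (F p)) ∘ e = fun x => phi (f x) :=
      funext fun x => by rw [Function.comp_apply, ← hfe]
    have hpFi : Integrable (fun p => phi (F p)) ((μ 0).prod Pn) :=
      (MP.integrable_comp_emb e.measurableEmbedding).mp (hpcomp.symm ▸ hpfi)
    have hIf : ∫ x, f x ∂P = ∫ p, F p ∂((μ 0).prod Pn) := by
      rw [← MP.integral_comp e.measurableEmbedding F]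
      exact integral_congr_ae (Filter.Eventually.of_forall hfe)
    have hIpf : ∫ x, phi (f x) ∂P = ∫ p, phi (F p) ∂((μ 0).prod Pn) := by
      rw [← MP.integral_comp e.measurableEmbedding (fun p => phi (F p))]
      exact integral_congr_ae (Filter.Eventually.of_forall fun x => congrArg phi (hfe x))
    have hGi : Integrable (fun y => ∫ z, phi (F (y, z)) ∂Pn) (μ 0) :=
      hpFi.integral_prod_left
    have hphiFinti : Integrable (fun y => phi (∫ z, F (y, z) ∂Pn)) (μ 0) :=
      integrable_phi_marginal (μ 0) Pn F hF0 hFi hpFi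
    -- step 2: exact splitting
    have hsplit : (∫ x, phi (f x) ∂P) - phi (∫ x, f x ∂P)
        = (∫ y, ((∫ z, phi (F (y, z)) ∂Pn) - phi (∫ z, F (y, z) ∂Pn)) ∂μ 0)
          + ((∫ y, phi (∫ z, F (y, z) ∂Pn) ∂μ 0) - phi (∫ p, F p ∂((μ 0).prod Pn))) := by
      rw [hIpf, hIf, integral_prod _ hpFi, integral_sub hGi hphiFinti]
      ring
    -- update transfer at index 0
    have hupd0 : ∀ (x : Fin (n + 1) → 𝒳) (w : 𝒳),
        f (Function.update x 0 w) = F (w, (e x).2) := by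
      intro x w
      have h1 : Function.update x 0 w = Fin.cons w (fun j => x j.succ) := by
        funext k
        rcases Fin.eq_zero_or_eq_succ k with hk | ⟨j, hk⟩
        · subst hk; simp
        · subst hk; simp [Function.update_of_ne (Fin.succ_ne_zero j), Fin.cons_succ]
      rw [h1, he_apply x, hF_def]
    -- step 3 : the i = 0 term
    have hR0 : (∫ x, ((∫ w, phi (f (Function.update x 0 w)) ∂μ 0)
          - phi (∫ w, f (Function.update x 0 w) ∂μ 0)) ∂P)
        = ∫ z, ((∫ w, phi (F (w, z)) ∂μ 0) - phi (∫ w, F (w, z) ∂μ 0)) ∂Pn := by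
      have h2 : ∀ x, ((∫ w, phi (f (Function.update x 0 w)) ∂μ 0)
            - phi (∫ w, f (Function.update x 0 w) ∂μ 0))
          = (fun p : 𝒳 × (Fin n → 𝒳) =>
              (∫ w, phi (F (w, p.2)) ∂μ 0) - phi (∫ w, F (w, p.2) ∂μ 0)) (e x) := by
        intro x
        show _ = (∫ w, phi (F (w, (e x).2)) ∂μ 0) - phi (∫ w, F (w, (e x).2) ∂μ 0)
        congr 1
        · exact integral_congr_ae (Filter.Eventually.of_forall fun w =>
            congrArg phi (hupd0 x w))
        · exact congrArg phi (integral_congr_ae (Filter.Eventually.of_forall fun w =>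
            hupd0 x w))
      rw [integral_congr_ae (Filter.Eventually.of_forall h2),
        MP.integral_comp e.measurableEmbedding
          (fun p : 𝒳 × (Fin n → 𝒳) =>
            (∫ w, phi (F (w, p.2)) ∂μ 0) - phi (∫ w, F (w, p.2) ∂μ 0)),
        integral_snd_prob (μ 0) Pn
          (fun z => (∫ w, phi (F (w, z)) ∂μ 0) - phi (∫ w, F (w, z) ∂μ 0))]
    have hT2 : (∫ y, phi (∫ z, F (y, z) ∂Pn) ∂μ 0) - phi (∫ p, F p ∂((μ 0).prod Pn))
        ≤ ∫ x, ((∫ w, phi (f (Function.update x 0 w)) ∂μ 0)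
          - phi (∫ w, f (Function.update x 0 w) ∂μ 0)) ∂P := by
      rw [hR0]
      exact entA (μ 0) Pn F hF0 hFi hpFi
    -- step 4 : remaining terms via the inductive hypothesis
    set D : Fin n → (𝒳 × (Fin n → 𝒳)) → ℝ := fun j p =>
      (∫ w, phi (F (p.1, Function.update p.2 j w)) ∂μ j.succ)
        - phi (∫ w, F (p.1, Function.update p.2 j w) ∂μ j.succ) with hD_def
    have hupdsucc : ∀ (j : Fin n) (x : Fin (n + 1) → 𝒳) (w : 𝒳),
        f (Function.update x j.succ w) = F ((e x).1, Function.update (e x).2 j w) := by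
      intro j x w
      rw [hfe (Function.update x j.succ w), he_apply (Function.update x j.succ w),
        he_apply x]
      refine congrArg F (Prod.ext ?_ ?_)
      · exact Function.update_of_ne (Fin.succ_ne_zero j).symm w x
      · exact Fin.tail_update_succ x j w
    have hMPT : ∀ i : Fin (n + 1), MeasurePreserving
        (fun q : (Fin (n + 1) → 𝒳) × 𝒳 => Function.update q.1 i q.2)
        (P.prod (μ i)) P := fun i => measurePreserving_update n μ i
    have hfT : ∀ i, Integrable
        (fun q : (Fin (n + 1) → 𝒳) × 𝒳 => f (Function.update q.1 i q.2))
        (P.prod (μ i)) := fun i => integrable_comp_mp (hMPT i) f hfi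
    have hpfT : ∀ i, Integrable
        (fun q : (Fin (n + 1) → 𝒳) × 𝒳 => phi (f (Function.update q.1 i q.2)))
        (P.prod (μ i)) := fun i => integrable_comp_mp (hMPT i) (fun x => phi (f x)) hpfi
    have hAi : ∀ i, Integrable (fun x => ∫ w, phi (f (Function.update x i w)) ∂μ i) P :=
      fun i => (hpfT i).integral_prod_left
    have hBi : ∀ i, Integrable (fun x => phi (∫ w, f (Function.update x i w) ∂μ i)) P :=
      fun i => integrable_phi_marginal P (μ i) _ (fun q => hf0 _) (hfT i) (hpfT i)
    have hD'i : ∀ i, Integrable (fun x => (∫ w, phi (f (Function.update x i w)) ∂μ i)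
        - phi (∫ w, f (Function.update x i w) ∂μ i)) P := fun i => (hAi i).sub (hBi i)
    have hDcomp : ∀ (j : Fin n) (x),
        ((∫ w, phi (f (Function.update x j.succ w)) ∂μ j.succ)
          - phi (∫ w, f (Function.update x j.succ w) ∂μ j.succ)) = D j (e x) := by
      intro j x
      show _ = (∫ w, phi (F ((e x).1, Function.update (e x).2 j w)) ∂μ j.succ)
        - phi (∫ w, F ((e x).1, Function.update (e x).2 j w) ∂μ j.succ)
      congr 1
      · exact integral_congr_ae (Filter.Eventually.of_forall fun w =>
          congrArg phi (hupdsucc j x w))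
      · exact congrArg phi (integral_congr_ae (Filter.Eventually.of_forall fun w =>
          hupdsucc j x w))
    have hDi : ∀ j : Fin n, Integrable (D j) ((μ 0).prod Pn) := by
      intro j
      refine (MP.integrable_comp_emb e.measurableEmbedding).mp ?_
      have hde : (D j) ∘ e
          = fun x => (∫ w, phi (f (Function.update x j.succ w)) ∂μ j.succ)
            - phi (∫ w, f (Function.update x j.succ w) ∂μ j.succ) :=
        funext fun x => (hDcomp j x).symm
      rw [hde]
      exact hD'i j.succ
    have hRj : ∀ j : Fin n,
        (∫ x, ((∫ w, phi (f (Function.update x j.succ w)) ∂μ j.succ)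
          - phi (∫ w, f (Function.update x j.succ w) ∂μ j.succ)) ∂P)
        = ∫ y, (∫ z, D j (y, z) ∂Pn) ∂μ 0 := by
      intro j
      rw [integral_congr_ae (Filter.Eventually.of_forall (hDcomp j)),
        MP.integral_comp e.measurableEmbedding (D j), integral_prod _ (hDi j)]
    have hae : ∀ᵐ y ∂μ 0, ((∫ z, phi (F (y, z)) ∂Pn) - phi (∫ z, F (y, z) ∂Pn))
        ≤ ∑ j : Fin n, ∫ z, D j (y, z) ∂Pn := by
      filter_upwards [hFi.prod_right_ae, hpFi.prod_right_ae] with y h1 h2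
      exact IH (fun j => μ j.succ) (fun j => hμ _) (fun z => F (y, z))
        (fun z => hf0 _) h1 h2
    have hT1 : (∫ y, ((∫ z, phi (F (y, z)) ∂Pn) - phi (∫ z, F (y, z) ∂Pn)) ∂μ 0)
        ≤ ∑ j : Fin n, ∫ x, ((∫ w, phi (f (Function.update x j.succ w)) ∂μ j.succ)
          - phi (∫ w, f (Function.update x j.succ w) ∂μ j.succ)) ∂P := by
      have step1 : (∫ y, ((∫ z, phi (F (y, z)) ∂Pn) - phi (∫ z, F (y, z) ∂Pn)) ∂μ 0)
          ≤ ∫ y, (∑ j : Fin n, ∫ z, D j (y, z) ∂Pn) ∂μ 0 :=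
        integral_mono_ae (hGi.sub hphiFinti)
          (integrable_finset_sum _ fun j _ => (hDi j).integral_prod_left) hae
      rw [integral_finset_sum _ (fun j _ => (hDi j).integral_prod_left)] at step1
      refine step1.trans (le_of_eq ?_)
      exact Finset.sum_congr rfl fun j _ => (hRj j).symm
    rw [hsplit, Fin.sum_univ_succ]
    linarith [hT1, hT2]


end EntTensor

/-- Tensorization (sub-additivity) of entropy for independent random variables
(Theorem 4.10 of Boucheron–Lugosi–Massart): with `Φ(x) = x ln x`,
`E[Φ(f)] - Φ(E[f]) ≤ ∑ᵢ E[ Eᵢ[Φ(f)] - Φ(Eᵢ[f]) ]`. -/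
theorem entropy_tensorization
    (𝒳 : Type*) [MeasurableSpace 𝒳] [Countable 𝒳] [MeasurableSingletonClass 𝒳]
    (n : ℕ) (μ : Fin n → Measure 𝒳) [∀ i, IsProbabilityMeasure (μ i)]
    (f : (Fin n → 𝒳) → ℝ) (hf0 : ∀ x, 0 ≤ f x)
    (Φ : ℝ → ℝ) (hΦ : ∀ x, Φ x = x * Real.log x)
    (hint : Integrable f (Measure.pi μ))
    (hintΦ : Integrable (fun x => Φ (f x)) (Measure.pi μ)) :
    (∫ x, Φ (f x) ∂Measure.pi μ) - Φ (∫ x, f x ∂Measure.pi μ)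
      ≤ ∑ i : Fin n, ∫ x,
          ((∫ y, Φ (f (Function.update x i y)) ∂μ i)
            - Φ (∫ y, f (Function.update x i y) ∂μ i)) ∂Measure.pi μ := by
  have hintphi : Integrable (fun x => EntTensor.phi (f x)) (Measure.pi μ) := by
    simpa only [EntTensor.phi, hΦ] using hintΦ
  have h2 := EntTensor.aux 𝒳 n μ (fun i => inferInstance) f hf0 hint hintphi
  simp only [EntTensor.phi] at h2
  simpa only [hΦ] using h2
end

section
/- Consider the forward hypercube CTMC on $\{0,1\}^n$ with single-bit-flip rates, started from an arbitrary distribution $q_0$. For any $t > 0$, any state $y$, and any coordinate $i$, the marginal $q_t$ satisfies the ratio bound $\frac{q_t(y \oplus e_i)}{q_t(y)} \le \frac{1 + e^{-2t}}{1 - e^{-2t}} \le 1 + t^{-1}$. -/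
open Real Classical NormedSpace

private lemma exp_invol' {A : Type*} [NormedRing A] [NormedAlgebra ℝ A] [CompleteSpace A]
    (P : A) (hP : P * P = 1) (s : ℝ) :
    NormedSpace.exp (s • P) = Real.cosh s • (1 : A) + Real.sinh s • P := by
  have hev : ∀ k : ℕ, P ^ (2 * k) = 1 := fun k => by
    rw [pow_mul, pow_two, hP, one_pow]
  have hod : ∀ k : ℕ, P ^ (2 * k + 1) = P := fun k => by
    rw [pow_succ, hev, one_mul]
  rw [NormedSpace.exp_eq_tsum ℝ]
  refine (HasSum.even_add_odd ?_ ?_).tsum_eq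
  · have h := (Real.hasSum_cosh s).smul_const (1 : A)
    convert h using 1
    funext k
    rw [smul_pow, hev k, smul_smul, div_eq_mul_inv, mul_comm]
  · have h := (Real.hasSum_sinh s).smul_const P
    convert h using 1
    funext k
    rw [smul_pow, hod k, smul_smul, div_eq_mul_inv, mul_comm]

private lemma matrix_exp_invol {m : Type*} [Fintype m] [DecidableEq m]
    (P : Matrix m m ℝ) (hP : P * P = 1) (s : ℝ) :
    NormedSpace.exp (s • P) = Real.cosh s • (1 : Matrix m m ℝ) + Real.sinh s • P := by
  letI : SeminormedRing (Matrix m m ℝ) := Matrix.linftyOpSemiNormedRing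
  letI : NormedRing (Matrix m m ℝ) := Matrix.linftyOpNormedRing
  letI : NormedAlgebra ℝ (Matrix m m ℝ) := Matrix.linftyOpNormedAlgebra
  exact exp_invol' P hP s

private def flipMat (n : ℕ) (i : Fin n) : Matrix (Fin n → Bool) (Fin n → Bool) ℝ :=
  Matrix.of fun y y' => if y' = Function.update y i (!(y i)) then 1 else 0

private lemma hc_flip_flip {n : ℕ} (i : Fin n) (y : Fin n → Bool) :
    Function.update (Function.update y i (!(y i))) i
      (!(Function.update y i (!(y i)) i)) = y := by
  simp [Function.update_idem]

private lemma flip_comm {n : ℕ} (i j : Fin n) (y : Fin n → Bool) :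
    Function.update (Function.update y i (!(y i))) j
        (!(Function.update y i (!(y i)) j)) =
      Function.update (Function.update y j (!(y j))) i
        (!(Function.update y j (!(y j)) i)) := by
  rcases eq_or_ne i j with rfl | hij
  · rfl
  · rw [Function.update_of_ne hij.symm, Function.update_of_ne hij,
      Function.update_comm hij]

private lemma flipMat_mul_self {n : ℕ} (i : Fin n) :
    flipMat n i * flipMat n i = 1 := by
  ext y y'
  rw [Matrix.mul_apply]
  simp only [flipMat, Matrix.of_apply, ite_mul, one_mul, zero_mul]
  rw [Finset.sum_ite_eq' Finset.univ (Function.update y i (!(y i)))]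
  simp [hc_flip_flip, Matrix.one_apply, eq_comm]

private lemma flipMat_comm {n : ℕ} (i j : Fin n) :
    flipMat n i * flipMat n j = flipMat n j * flipMat n i := by
  ext y y'
  rw [Matrix.mul_apply, Matrix.mul_apply]
  simp only [flipMat, Matrix.of_apply, ite_mul, one_mul, zero_mul]
  rw [Finset.sum_ite_eq' Finset.univ (Function.update y i (!(y i))),
    Finset.sum_ite_eq' Finset.univ (Function.update y j (!(y j)))]
  simp [flip_comm i j y]

private lemma commute_helper {n : ℕ} (c d : ℝ) (i j : Fin n) :
    Commute (c • (1 : Matrix (Fin n → Bool) (Fin n → Bool) ℝ) + d • flipMat n i)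
      (c • (1 : Matrix (Fin n → Bool) (Fin n → Bool) ℝ) + d • flipMat n j) := by
  have cij : Commute (flipMat n i) (flipMat n j) := flipMat_comm i j
  exact Commute.add_left
    (Commute.add_right (((Commute.one_left (1 : Matrix _ _ ℝ)).smul_left c).smul_right c)
      (((Commute.one_left (flipMat n j)).smul_left c).smul_right d))
    (Commute.add_right (((Commute.one_right (flipMat n i)).smul_left d).smul_right c)
      ((cij.smul_left d).smul_right d))

private lemma noncommProd_entry {n : ℕ} (a b : ℝ)
    (f : Fin n → Matrix (Fin n → Bool) (Fin n → Bool) ℝ)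
    (hf : ∀ i, f i = a • (1 : Matrix (Fin n → Bool) (Fin n → Bool) ℝ) + b • flipMat n i)
    (hcomm : ∀ i j, Commute (f i) (f j)) (y0 : Fin n → Bool) :
    ∀ (S : Finset (Fin n)) (y : Fin n → Bool),
      (S.noncommProd f (Set.pairwise_of_forall _ _ fun i j => hcomm i j)) y y0 =
        (∏ j ∈ S, (if y j = y0 j then a else b)) *
          ∏ j ∈ Sᶜ, (if y j = y0 j then (1:ℝ) else 0) := by
  intro S
  induction S using Finset.induction_on with
  | empty =>
      intro y
      rw [Finset.noncommProd_empty]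
      simp only [Finset.prod_empty, one_mul, Finset.compl_empty]
      rcases eq_or_ne y y0 with rfl | hne
      · simp [Matrix.one_apply]
      · obtain ⟨j, hj⟩ := Function.ne_iff.mp hne
        rw [Matrix.one_apply_ne hne, Finset.prod_eq_zero (Finset.mem_univ j)]
        simp [hj]
  | @insert i S hi ih =>
      intro y
      rw [Finset.noncommProd_insert_of_notMem _ _ _ _ hi, Matrix.mul_apply]
      have key : ∀ z, f i y z = (if z = y then a else 0)
          + (if z = Function.update y i (!(y i)) then b else 0) := by
        intro z
        rw [hf i]
        simp [Matrix.one_apply, flipMat, eq_comm, mul_ite]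
      simp only [key, add_mul, ite_mul, zero_mul, Finset.sum_add_distrib,
        Finset.sum_ite_eq', Finset.mem_univ, if_true]
      rw [ih y, ih (Function.update y i (!(y i)))]
      have hiSc : i ∈ Sᶜ := Finset.mem_compl.mpr hi
      have hcompl : (insert i S)ᶜ = Sᶜ.erase i := by
        rw [Finset.compl_insert]
      have hprodS : (∏ j ∈ S, (if Function.update y i (!(y i)) j = y0 j then a else b))
          = ∏ j ∈ S, (if y j = y0 j then a else b) :=
        Finset.prod_congr rfl fun j hj => by
          rw [Function.update_of_ne (by rintro rfl; exact hi hj)]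
      have hprodE : (∏ j ∈ Sᶜ.erase i,
            (if Function.update y i (!(y i)) j = y0 j then (1:ℝ) else 0))
          = ∏ j ∈ Sᶜ.erase i, (if y j = y0 j then (1:ℝ) else 0) :=
        Finset.prod_congr rfl fun j hj => by
          rw [Function.update_of_ne (Finset.ne_of_mem_erase hj)]
      rw [hprodS, hcompl,
        ← Finset.mul_prod_erase _ (fun j => if y j = y0 j then (1:ℝ) else 0) hiSc,
        ← Finset.mul_prod_erase _ (fun j => if Function.update y i (!(y i)) j = y0 j then (1:ℝ) else 0) hiSc,
        hprodE, Finset.prod_insert hi, Function.update_self]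
      cases h : y i <;> cases h0 : y0 i <;> simp [h, h0] <;> ring

private lemma flip_filter {n : ℕ} (i : Fin n) (y : Fin n → Bool) :
    (Finset.filter (fun j => y j ≠ Function.update y i (!(y i)) j) Finset.univ) = {i} := by
  ext j
  simp only [Finset.mem_filter, Finset.mem_univ, true_and, Finset.mem_singleton]
  rcases eq_or_ne j i with rfl | hj
  · simp
  · simp [Function.update_of_ne hj, hj]

private lemma flip_count {n : ℕ} (y y' : Fin n → Bool) :
    (∑ i, (if y' = Function.update y i (!(y i)) then (1:ℝ) else 0)) =
      if hammingDist y y' = 1 then 1 else 0 := by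
  have hdist : ∀ i : Fin n, hammingDist y (Function.update y i (!(y i))) = 1 := by
    intro i
    show (Finset.filter _ Finset.univ).card = 1
    rw [flip_filter]
    simp
  by_cases hd : hammingDist y y' = 1
  · rw [if_pos hd]
    have hcard : (Finset.filter (fun j => y j ≠ y' j) Finset.univ).card = 1 := hd
    obtain ⟨i0, hi0⟩ := Finset.card_eq_one.mp hcard
    have hyy' : y' = Function.update y i0 (!(y i0)) := by
      funext j
      rcases eq_or_ne j i0 with rfl | hj
      · have : j ∈ Finset.filter (fun j => y j ≠ y' j) Finset.univ := by
          rw [hi0]; exact Finset.mem_singleton_self j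
        simp only [Finset.mem_filter] at this
        rw [Function.update_self]
        cases hyj : y j <;> cases hy'j : y' j <;> simp_all
      · have : j ∉ Finset.filter (fun j => y j ≠ y' j) Finset.univ := by
          rw [hi0]; simpa using hj
        simp only [Finset.mem_filter, Finset.mem_univ, true_and, not_not] at this
        rw [Function.update_of_ne hj, this]
    rw [Finset.sum_eq_single_of_mem i0 (Finset.mem_univ i0)]
    · rw [if_pos hyy']
    · intro i _ hne
      rw [if_neg]
      intro h
      have h2 : (Finset.filter (fun j => y j ≠ y' j) Finset.univ) = {i} := by
        rw [h]; exact flip_filter i y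
      rw [hi0] at h2
      exact hne (Finset.singleton_injective h2).symm
  · rw [if_neg hd]
    refine Finset.sum_eq_zero fun i _ => ?_
    rw [if_neg]
    intro h
    exact hd (h ▸ hdist i)

private lemma bool_flip_eq {x z : Bool} (h : ¬ x = z) : (!x) = z := by
  cases x <;> cases z <;> simp_all

private lemma exp_affine {n : ℕ} (t : ℝ) (i : Fin n) :
    NormedSpace.exp ((-t) • (1 : Matrix (Fin n → Bool) (Fin n → Bool) ℝ) + t • flipMat n i)
      = ((1 + Real.exp (-2*t))/2) • (1 : Matrix (Fin n → Bool) (Fin n → Bool) ℝ)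
        + ((1 - Real.exp (-2*t))/2) • flipMat n i := by
  have hc : Commute ((-t) • (1 : Matrix (Fin n → Bool) (Fin n → Bool) ℝ)) (t • flipMat n i) :=
    ((Commute.one_left (flipMat n i)).smul_left (-t)).smul_right t
  have hadd := Matrix.exp_add_of_commute _ _ hc
  rw [hadd]
  have h1 : NormedSpace.exp ((-t) • (1 : Matrix (Fin n → Bool) (Fin n → Bool) ℝ))
      = Real.exp (-t) • 1 := by
    rw [matrix_exp_invol 1 (one_mul 1) (-t), ← add_smul, Real.cosh_add_sinh]
  rw [h1, matrix_exp_invol _ (flipMat_mul_self i) t, mul_add,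
    smul_mul_smul_comm, smul_mul_smul_comm, one_mul, one_mul]
  have e1 : Real.exp (-t) * Real.exp t = 1 := by rw [← Real.exp_add]; simp
  have e2 : Real.exp (-t) * Real.exp (-t) = Real.exp (-2*t) := by
    rw [← Real.exp_add, show (-t) + (-t) = -2*t by ring]
  have ha : Real.exp (-t) * Real.cosh t = (1 + Real.exp (-2*t))/2 := by
    rw [Real.cosh_eq]
    linear_combination e1/2 + e2/2
  have hb : Real.exp (-t) * Real.sinh t = (1 - Real.exp (-2*t))/2 := by
    rw [Real.sinh_eq]
    linear_combination e1/2 - e2/2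
  rw [ha, hb]

set_option maxHeartbeats 1000000 in
/-- Ratio bound along the forward hypercube CTMC: for `t > 0`,
`q_t(y ⊕ eᵢ) / q_t(y) ≤ (1 + e^{-2t})/(1 - e^{-2t}) ≤ 1 + t⁻¹`. -/
theorem hypercube_marginal_ratio_bound
    (n : ℕ) (t : ℝ) (ht : 0 < t)
    (R : Matrix (Fin n → Bool) (Fin n → Bool) ℝ)
    (hR : ∀ y y' : Fin n → Bool,
      R y y' = if hammingDist y y' = 1 then (1 : ℝ)
               else if y = y' then -(n : ℝ) else 0)
    (q₀ : (Fin n → Bool) → ℝ)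
    (hq₀ : ∀ y, 0 ≤ q₀ y) (hsum : ∑ y, q₀ y = 1)
    (q : ℝ → (Fin n → Bool) → ℝ)
    (hq : ∀ s, q s = (NormedSpace.exp (s • R)).mulVec q₀)
    (y : Fin n → Bool) (i : Fin n) :
    q t (Function.update y i (!(y i))) / q t y
        ≤ (1 + Real.exp (-2 * t)) / (1 - Real.exp (-2 * t)) ∧
      (1 + Real.exp (-2 * t)) / (1 - Real.exp (-2 * t)) ≤ 1 + t⁻¹ := by
  have hu0 : 0 < Real.exp (-2*t) := Real.exp_pos _
  have hu1 : Real.exp (-2*t) < 1 := by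
    rw [show (1:ℝ) = Real.exp 0 from (Real.exp_zero).symm]
    exact Real.exp_lt_exp.mpr (by linarith)
  set u := Real.exp (-2*t) with hu
  set a := (1 + u)/2 with ha
  set b := (1 - u)/2 with hb
  have hb0 : 0 < b := by rw [hb]; linarith
  have ha0 : 0 < a := by rw [ha]; linarith
  have hba : b ≤ a := by rw [ha, hb]; linarith
  -- R as a sum of flip generators
  have hR' : R = ∑ i, (flipMat n i - 1) := by
    ext z w
    rw [hR z w, Matrix.sum_apply]
    simp only [Matrix.sub_apply, Finset.sum_sub_distrib]
    rw [show (∑ i : Fin n, flipMat n i z w)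
        = ∑ i : Fin n, (if w = Function.update z i (!(z i)) then (1:ℝ) else 0) from rfl,
      flip_count z w]
    have hones : (∑ _i : Fin n, (1 : Matrix (Fin n → Bool) (Fin n → Bool) ℝ) z w)
        = if z = w then (n:ℝ) else 0 := by
      rw [Finset.sum_const, Finset.card_univ, Fintype.card_fin, nsmul_eq_mul,
        Matrix.one_apply, mul_ite, mul_one, mul_zero]
    rw [hones]
    by_cases h1 : hammingDist z w = 1
    · have hne : z ≠ w := by
        intro h; subst h; rw [hammingDist_self] at h1; exact one_ne_zero h1.symm
      simp [h1, hne]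
    · by_cases h2 : z = w
      · subst h2; simp [h1]
      · simp [h1, h2]
  have htR : t • R = ∑ i, ((-t) • (1 : Matrix (Fin n → Bool) (Fin n → Bool) ℝ)
      + t • flipMat n i) := by
    rw [hR', Finset.smul_sum]
    refine Finset.sum_congr rfl fun i _ => ?_
    rw [smul_sub, sub_eq_neg_add, ← neg_smul]
  have hcommA : ∀ i j : Fin n,
      Commute ((-t) • (1 : Matrix (Fin n → Bool) (Fin n → Bool) ℝ) + t • flipMat n i)
        ((-t) • (1 : Matrix (Fin n → Bool) (Fin n → Bool) ℝ) + t • flipMat n j) :=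
    fun i j => commute_helper (-t) t i j
  have hexpA : ∀ i : Fin n,
      NormedSpace.exp ((-t) • (1 : Matrix (Fin n → Bool) (Fin n → Bool) ℝ) + t • flipMat n i)
        = a • 1 + b • flipMat n i := by
    intro i
    rw [exp_affine t i, ← hu, ← ha, ← hb]
  have hcommE : ∀ i j : Fin n,
      Commute (NormedSpace.exp ((-t) • (1 : Matrix (Fin n → Bool) (Fin n → Bool) ℝ)
          + t • flipMat n i))
        (NormedSpace.exp ((-t) • (1 : Matrix (Fin n → Bool) (Fin n → Bool) ℝ)
          + t • flipMat n j)) := by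
    intro i j
    rw [hexpA i, hexpA j]
    exact commute_helper a b i j
  -- entries of the exponential
  have hEntry : ∀ z w : Fin n → Bool,
      NormedSpace.exp (t • R) z w = ∏ j, (if z j = w j then a else b) := by
    intro z w
    rw [htR, Matrix.exp_sum_of_commute Finset.univ _ (fun i _ j _ _ => hcommA i j)]
    rw [noncommProd_entry a b _ hexpA hcommE w Finset.univ z]
    rw [Finset.compl_univ, Finset.prod_empty, mul_one]
  have hKpos : ∀ z w : Fin n → Bool, 0 < ∏ j, (if z j = w j then a else b) := by
    intro z w
    refine Finset.prod_pos fun j _ => ?_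
    split <;> [exact ha0; exact hb0]
  -- per-entry ratio bound
  have hratio : ∀ w : Fin n → Bool,
      (∏ j, (if Function.update y i (!(y i)) j = w j then a else b))
        ≤ (a/b) * ∏ j, (if y j = w j then a else b) := by
    intro w
    rw [← Finset.mul_prod_erase Finset.univ
        (fun j => if Function.update y i (!(y i)) j = w j then a else b) (Finset.mem_univ i),
      ← Finset.mul_prod_erase Finset.univ
        (fun j => if y j = w j then a else b) (Finset.mem_univ i)]
    have hrest : (∏ j ∈ Finset.univ.erase i,
          (if Function.update y i (!(y i)) j = w j then a else b))
        = ∏ j ∈ Finset.univ.erase i, (if y j = w j then a else b) :=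
      Finset.prod_congr rfl fun j hj => by
        rw [Function.update_of_ne (Finset.ne_of_mem_erase hj)]
    rw [hrest, Function.update_self]
    have hrpos : 0 < ∏ j ∈ Finset.univ.erase i, (if y j = w j then a else b) :=
      Finset.prod_pos fun j _ => by split <;> [exact ha0; exact hb0]
    have hc' : (if (!(y i)) = w i then a else b) ≤ (a/b) * (if y i = w i then a else b) := by
      by_cases h : y i = w i
      · rw [if_pos h, if_neg (by rw [← h]; simp)]
        calc b ≤ a := hba
          _ = 1 * a := (one_mul a).symm
          _ ≤ (a/b) * a :=
            mul_le_mul_of_nonneg_right ((one_le_div hb0).mpr hba) ha0.le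
      · rw [if_neg h, if_pos (bool_flip_eq h)]
        rw [div_mul_cancel₀ a hb0.ne']
    calc (if (!(y i)) = w i then a else b) * ∏ j ∈ Finset.univ.erase i,
          (if y j = w j then a else b)
        ≤ ((a/b) * (if y i = w i then a else b)) * ∏ j ∈ Finset.univ.erase i,
          (if y j = w j then a else b) := mul_le_mul_of_nonneg_right hc' hrpos.le
      _ = (a/b) * ((if y i = w i then a else b) * ∏ j ∈ Finset.univ.erase i,
          (if y j = w j then a else b)) := by ring
  -- values of q
  have hexpM : NormedSpace.exp (t • R)
      = Matrix.of (fun z w => ∏ j, (if z j = w j then a else b)) := by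
    ext z w
    exact hEntry z w
  have hqv : ∀ z : Fin n → Bool,
      q t z = ∑ w, (∏ j, (if z j = w j then a else b)) * q₀ w := by
    intro z
    rw [hq t, hexpM]
    simp only [Matrix.mulVec, dotProduct, Matrix.of_apply]
  have hy0 : ∃ w, 0 < q₀ w := by
    by_contra h
    push_neg at h
    have hz : ∀ w, q₀ w = 0 := fun w => le_antisymm (h w) (hq₀ w)
    rw [Finset.sum_congr rfl fun w _ => hz w] at hsum
    simp at hsum
  obtain ⟨w0, hw0⟩ := hy0
  have hqpos : 0 < q t y := by
    rw [hqv]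
    exact Finset.sum_pos' (fun w _ => mul_nonneg (hKpos y w).le (hq₀ w))
      ⟨w0, Finset.mem_univ w0, mul_pos (hKpos y w0) hw0⟩
  have hqle : q t (Function.update y i (!(y i))) ≤ (a/b) * q t y := by
    rw [hqv, hqv, Finset.mul_sum]
    refine Finset.sum_le_sum fun w _ => ?_
    calc (∏ j, (if Function.update y i (!(y i)) j = w j then a else b)) * q₀ w
        ≤ ((a/b) * ∏ j, (if y j = w j then a else b)) * q₀ w :=
          mul_le_mul_of_nonneg_right (hratio w) (hq₀ w)
      _ = (a/b) * ((∏ j, (if y j = w j then a else b)) * q₀ w) := by ring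
  have hab : a / b = (1 + u) / (1 - u) := by
    rw [ha, hb, div_div_div_comm]
    norm_num
  have hgoal2 : (1 + u) / (1 - u) ≤ 1 + t⁻¹ := by
    have htne : t ≠ 0 := ht.ne'
    have hkey : u * (2*t+1) ≤ 1 := by
      have h1 : 2*t + 1 ≤ Real.exp (2*t) := Real.add_one_le_exp (2*t)
      have h2 : u * Real.exp (2*t) = 1 := by
        rw [hu, ← Real.exp_add, show -2*t + 2*t = 0 by ring, Real.exp_zero]
      nlinarith [hu0]
    rw [div_le_iff₀ (by linarith : (0:ℝ) < 1 - u)]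
    have h4 : t⁻¹ * (1 - u*(2*t+1)) = t⁻¹ - 2*u - t⁻¹ * u := by
      field_simp
      ring
    have h3 : 0 ≤ t⁻¹ * (1 - u*(2*t+1)) :=
      mul_nonneg (inv_nonneg.mpr ht.le) (by linarith)
    rw [h4] at h3
    nlinarith [h3]
  refine ⟨?_, ?_⟩
  · show q t (Function.update y i (!(y i))) / q t y ≤ (1 + u) / (1 - u)
    rw [div_le_iff₀ hqpos, ← hab]
    exact hqle
  · exact hgoal2
end

section
/- Consider the hypercube CTMC on $\{0,1\}^n$ run forward for time $T$, and define the reverse-time rate at time $t$ by $R^\gets_t(y', y) = R^\to(y, y') \cdot q^\to_{T-t}(y')/q^\to_{T-t}(y)$ where $R^\to$ is the flip-rate-1 generator. Then for every state $y$ and every $t \in [0, T)$, the total outgoing rate satisfies $\sum_{y' \ne y} R^\gets_t(y', y) \le n\,(1 + (T-t)^{-1}) \le 2n \max\{1, (T-t)^{-1}\}$. -/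
open Real Classical NormedSpace

namespace ReverseRateAux

/-- Even and odd parts of the exponential series. -/
lemma even_odd_exp (s : ℝ) :
    HasSum (fun k : ℕ => s ^ (2 * k) / (Nat.factorial (2 * k))) ((Real.exp s + Real.exp (-s)) / 2) ∧
    HasSum (fun k : ℕ => s ^ (2 * k + 1) / (Nat.factorial (2 * k + 1))) ((Real.exp s - Real.exp (-s)) / 2) := by
  have hS : ∀ x : ℝ, HasSum (fun k : ℕ => x ^ k / (Nat.factorial k)) (Real.exp x) := fun x => by
    rw [Real.exp_eq_exp_ℝ]; exact NormedSpace.expSeries_div_hasSum_exp x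
  have hE0 : Summable ((fun k : ℕ => s ^ k / (Nat.factorial k)) ∘ (fun k : ℕ => 2 * k)) :=
    Summable.comp_injective (Real.summable_pow_div_factorial s) (fun a b h => by omega)
  have hE : Summable fun k : ℕ => s ^ (2 * k) / (Nat.factorial (2 * k)) :=
    hE0.congr (fun k => rfl)
  have hO0 : Summable ((fun k : ℕ => s ^ k / (Nat.factorial k)) ∘ (fun k : ℕ => 2 * k + 1)) :=
    Summable.comp_injective (Real.summable_pow_div_factorial s) (fun a b h => by omega)
  have hO : Summable fun k : ℕ => s ^ (2 * k + 1) / (Nat.factorial (2 * k + 1)) :=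
    hO0.congr (fun k => rfl)
  have h1 : HasSum (fun k : ℕ => s ^ k / (Nat.factorial k))
      ((∑' k : ℕ, s ^ (2 * k) / (Nat.factorial (2 * k))) + ∑' k : ℕ, s ^ (2 * k + 1) / (Nat.factorial (2 * k + 1))) :=
    HasSum.even_add_odd hE.hasSum hO.hasSum
  have h2 : HasSum (fun k : ℕ => (-s) ^ k / (Nat.factorial k))
      ((∑' k : ℕ, s ^ (2 * k) / (Nat.factorial (2 * k))) + -∑' k : ℕ, s ^ (2 * k + 1) / (Nat.factorial (2 * k + 1))) := by
    refine HasSum.even_add_odd ?_ ?_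
    · have hfe : (fun k : ℕ => (-s) ^ (2 * k) / (Nat.factorial (2 * k))) =
          fun k : ℕ => s ^ (2 * k) / (Nat.factorial (2 * k)) :=
        funext fun k => by rw [(even_two_mul k).neg_pow]
      rw [hfe]; exact hE.hasSum
    · have hfo : (fun k : ℕ => (-s) ^ (2 * k + 1) / (Nat.factorial (2 * k + 1))) =
          fun k : ℕ => -(s ^ (2 * k + 1) / (Nat.factorial (2 * k + 1))) :=
        funext fun k => by rw [Odd.neg_pow ⟨k, by ring⟩]; ring
      rw [hfo]; exact hO.hasSum.neg
  have e1 := h1.unique (hS s)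
  have e2 := h2.unique (hS (-s))
  constructor
  · have : (∑' k : ℕ, s ^ (2 * k) / (Nat.factorial (2 * k))) = (Real.exp s + Real.exp (-s)) / 2 := by
      linarith
    rw [← this]; exact hE.hasSum
  · have : (∑' k : ℕ, s ^ (2 * k + 1) / (Nat.factorial (2 * k + 1))) = (Real.exp s - Real.exp (-s)) / 2 := by
      linarith
    rw [← this]; exact hO.hasSum

variable {n : ℕ}

lemma exp_hasSum (A : Matrix (Fin n → Bool) (Fin n → Bool) ℝ) :
    HasSum (fun k : ℕ => ((Nat.factorial k : ℝ))⁻¹ • A ^ k) (NormedSpace.exp A) := by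
  letI : SeminormedRing (Matrix (Fin n → Bool) (Fin n → Bool) ℝ) := Matrix.linftyOpSemiNormedRing
  letI : NormedRing (Matrix (Fin n → Bool) (Fin n → Bool) ℝ) := Matrix.linftyOpNormedRing
  letI : NormedAlgebra ℝ (Matrix (Fin n → Bool) (Fin n → Bool) ℝ) := Matrix.linftyOpNormedAlgebra
  rw [NormedSpace.exp_eq_tsum ℝ]
  exact (NormedSpace.expSeries_summable' (𝕂 := ℝ) A).hasSum

lemma exp_entry_hasSum (A : Matrix (Fin n → Bool) (Fin n → Bool) ℝ) (y z : Fin n → Bool) :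
    HasSum (fun k : ℕ => ((Nat.factorial k : ℝ))⁻¹ * ((A ^ k) y z)) (NormedSpace.exp A y z) := by
  have h := exp_hasSum A
  have hc : Continuous fun M : Matrix (Fin n → Bool) (Fin n → Bool) ℝ => M y z :=
    (continuous_apply z).comp (continuous_apply y)
  have := h.map (AddMonoidHom.mk' (fun M : Matrix (Fin n → Bool) (Fin n → Bool) ℝ => M y z)
    (fun a b => rfl)) hc
  exact this

lemma pow_entry_nonneg {A : Matrix (Fin n → Bool) (Fin n → Bool) ℝ}
    (hA : ∀ y z, 0 ≤ A y z) (k : ℕ) : ∀ y z, 0 ≤ (A ^ k) y z := by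
  induction k with
  | zero =>
    intro y z
    rw [pow_zero, Matrix.one_apply]
    split <;> norm_num
  | succ k ih =>
    intro y z
    rw [pow_succ, Matrix.mul_apply]
    exact Finset.sum_nonneg fun w _ => mul_nonneg (ih y w) (hA w z)

lemma exp_entry_nonneg {A : Matrix (Fin n → Bool) (Fin n → Bool) ℝ}
    (hA : ∀ y z, 0 ≤ A y z) (y z : Fin n → Bool) : 0 ≤ NormedSpace.exp A y z :=
  (exp_entry_hasSum A y z).nonneg fun k =>
    mul_nonneg (by positivity) (pow_entry_nonneg hA k y z)

lemma smul_one_eq_diagonal (c : ℝ) :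
    c • (1 : Matrix (Fin n → Bool) (Fin n → Bool) ℝ) = Matrix.diagonal fun _ => c := by
  ext y z
  by_cases h : y = z <;> simp [Matrix.one_apply, Matrix.diagonal_apply, h]

lemma exp_smul_one (c : ℝ) :
    NormedSpace.exp (c • (1 : Matrix (Fin n → Bool) (Fin n → Bool) ℝ)) =
      Real.exp c • (1 : Matrix (Fin n → Bool) (Fin n → Bool) ℝ) := by
  rw [smul_one_eq_diagonal, Matrix.exp_diagonal]
  have h : NormedSpace.exp (fun _ : Fin n → Bool => c) =
      fun _ : Fin n → Bool => Real.exp c :=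
    funext fun a => by rw [Pi.coe_exp, Real.exp_eq_exp_ℝ]
  rw [h, smul_one_eq_diagonal]

lemma exp_add_smul_one (A : Matrix (Fin n → Bool) (Fin n → Bool) ℝ) (c : ℝ) :
    NormedSpace.exp (A + c • (1 : Matrix (Fin n → Bool) (Fin n → Bool) ℝ)) =
      Real.exp c • NormedSpace.exp A := by
  rw [Matrix.exp_add_of_commute A (c • 1) ((Commute.one_right A).smul_right c),
    exp_smul_one, mul_smul_comm, mul_one]

lemma exp_entry_nonneg' (A : Matrix (Fin n → Bool) (Fin n → Bool) ℝ) (c : ℝ)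
    (h : ∀ y z, 0 ≤ A y z + c * (if y = z then 1 else 0)) (y z : Fin n → Bool) :
    0 ≤ NormedSpace.exp A y z := by
  have hA : A = (A + c • 1) + (-c) • (1 : Matrix (Fin n → Bool) (Fin n → Bool) ℝ) := by
    rw [neg_smul]; abel
  rw [hA, exp_add_smul_one]
  have h1 : 0 ≤ NormedSpace.exp (A + c • (1 : Matrix (Fin n → Bool) (Fin n → Bool) ℝ)) y z := by
    apply exp_entry_nonneg
    intro a b
    have := h a b
    simpa [Matrix.add_apply, Matrix.smul_apply, Matrix.one_apply, mul_ite] using this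
  have : (Real.exp (-c) • NormedSpace.exp
      (A + c • (1 : Matrix (Fin n → Bool) (Fin n → Bool) ℝ))) y z
      = Real.exp (-c) * NormedSpace.exp
      (A + c • (1 : Matrix (Fin n → Bool) (Fin n → Bool) ℝ)) y z := rfl
  rw [this]
  positivity

/-! ### Flips -/

def flip (i : Fin n) (y : Fin n → Bool) : Fin n → Bool := Function.update y i (!y i)

lemma flip_self (i : Fin n) (y : Fin n → Bool) : flip i y i = !y i := by
  simp [flip]

lemma flip_ne (i : Fin n) {j : Fin n} (h : j ≠ i) (y : Fin n → Bool) : flip i y j = y j := by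
  simp [flip, Function.update_of_ne h]

lemma flip_flip (i : Fin n) (y : Fin n → Bool) : flip i (flip i y) = y := by
  funext j
  by_cases h : j = i
  · subst h; rw [flip_self, flip_self, Bool.not_not]
  · rw [flip_ne i h, flip_ne i h]

lemma hamming_flip_left (i : Fin n) (y z : Fin n → Bool) :
    hammingDist (flip i y) z = hammingDist y (flip i z) := by
  unfold hammingDist
  congr 1
  apply Finset.filter_congr
  intro j _
  by_cases h : j = i
  · subst h
    rw [flip_self, flip_self]
    cases y j <;> cases z j <;> simp
  · rw [flip_ne i h, flip_ne i h]

lemma hamming_flip_eq_one (i : Fin n) (y : Fin n → Bool) : hammingDist y (flip i y) = 1 := by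
  unfold hammingDist
  have : (Finset.univ.filter fun j => y j ≠ flip i y j) = {i} := by
    ext j
    simp only [Finset.mem_filter, Finset.mem_univ, true_and, Finset.mem_singleton]
    by_cases h : j = i
    · subst h
      rw [flip_self]
      cases y j <;> simp
    · rw [flip_ne i h]
      simp [h]
  rw [this, Finset.card_singleton]

lemma eq_flip_of_hamming_one {y y' : Fin n → Bool} (h : hammingDist y y' = 1) :
    ∃ i, y' = flip i y := by
  unfold hammingDist at h
  obtain ⟨i, hi⟩ := Finset.card_eq_one.mp h
  have hmem : ∀ j, (y j ≠ y' j) ↔ j = i := by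
    intro j
    constructor
    · intro hj
      have : j ∈ Finset.univ.filter fun j => y j ≠ y' j :=
        Finset.mem_filter.mpr ⟨Finset.mem_univ _, hj⟩
      rw [hi] at this
      simpa using this
    · intro hj
      subst hj
      have : j ∈ ({j} : Finset (Fin n)) := Finset.mem_singleton_self j
      rw [← hi] at this
      exact (Finset.mem_filter.mp this).2
  refine ⟨i, funext fun j => ?_⟩
  by_cases hj : j = i
  · subst hj
    have h2 : y j ≠ y' j := (hmem j).mpr rfl
    rw [flip_self]
    cases hb : y j <;> cases hb' : y' j <;> simp_all
  · have h2 : ¬(y j ≠ y' j) := fun hc => hj ((hmem j).mp hc)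
    rw [flip_ne i hj]
    push_neg at h2
    exact h2.symm

lemma flip_ne_self (i : Fin n) (y : Fin n → Bool) : flip i y ≠ y := by
  intro h
  have := congrFun h i
  rw [flip_self] at this
  cases hb : y i <;> simp_all

/-! ### The flip matrix -/

def Fm (i : Fin n) : Matrix (Fin n → Bool) (Fin n → Bool) ℝ :=
  Matrix.of fun y z => if z = flip i y then 1 else 0

lemma Fm_apply (i : Fin n) (y z : Fin n → Bool) :
    Fm i y z = if z = flip i y then 1 else 0 := rfl

lemma Fm_mul_apply (i : Fin n) (A : Matrix (Fin n → Bool) (Fin n → Bool) ℝ)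
    (y z : Fin n → Bool) : (Fm i * A) y z = A (flip i y) z := by
  simp [Matrix.mul_apply, Fm_apply, ite_mul, one_mul, zero_mul]

lemma mul_Fm_apply (i : Fin n) (A : Matrix (Fin n → Bool) (Fin n → Bool) ℝ)
    (y z : Fin n → Bool) : (A * Fm i) y z = A y (flip i z) := by
  have hcond : ∀ w : Fin n → Bool, (z = flip i w) = (w = flip i z) := fun w =>
    propext ⟨fun h => by rw [h, flip_flip], fun h => by rw [h, flip_flip]⟩
  simp only [Matrix.mul_apply, Fm_apply, mul_ite, mul_one, mul_zero, hcond]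
  simp

lemma Fm_mul_Fm (i : Fin n) : Fm i * Fm i = 1 := by
  ext y z
  rw [Fm_mul_apply, Fm_apply, flip_flip, Matrix.one_apply]
  simp [eq_comm]

lemma Fm_diag_zero (i : Fin n) (y : Fin n → Bool) : Fm i y y = 0 := by
  rw [Fm_apply, if_neg]
  exact fun h => flip_ne_self i y h.symm

section WithR

variable (R : Matrix (Fin n → Bool) (Fin n → Bool) ℝ)
variable (hR : ∀ y y' : Fin n → Bool,
  R y y' = if hammingDist y y' = 1 then (1 : ℝ) else if y = y' then -(n : ℝ) else 0)

include hR

lemma R_comm_Fm (i : Fin n) : R * Fm i = Fm i * R := by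
  ext y z
  rw [mul_Fm_apply, Fm_mul_apply, hR, hR, hamming_flip_left]
  have he : (flip i y = z) ↔ (y = flip i z) :=
    ⟨fun h => by rw [← h, flip_flip], fun h => by rw [h, flip_flip]⟩
  exact if_congr Iff.rfl rfl (if_congr he.symm rfl rfl)

lemma R_offdiag_nonneg {y z : Fin n → Bool} (h : y ≠ z) : 0 ≤ R y z := by
  rw [hR]
  by_cases hd : hammingDist y z = 1
  · simp [hd]
  · simp [hd, h]

set_option maxHeartbeats 1600000 in
lemma exp_flip_le {s : ℝ} (hs : 0 < s) (i : Fin n) (y z : Fin n → Bool) :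
    NormedSpace.exp (s • R) (flip i y) z ≤ (1 + s⁻¹) * NormedSpace.exp (s • R) y z := by
  haveI : T2Space (Matrix (Fin n → Bool) (Fin n → Bool) ℝ) :=
    inferInstanceAs (T2Space ((Fin n → Bool) → (Fin n → Bool) → ℝ))
  set B : Matrix (Fin n → Bool) (Fin n → Bool) ℝ := R - (Fm i) + 1 with hB
  have hcommRF : R * (Fm i) = (Fm i) * R := R_comm_Fm R hR i
  have hcommBF : B * (Fm i) = (Fm i) * B := by
    rw [hB, add_mul, sub_mul, one_mul, mul_add, mul_sub, mul_one, hcommRF]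
  have hsplit : s • R = s • B + s • ((Fm i) - 1) := by
    rw [← smul_add]
    congr 1
    rw [hB]; abel
  have hcomm2 : Commute (s • B) (s • ((Fm i) - 1)) := by
    apply Commute.smul_left
    apply Commute.smul_right
    show B * ((Fm i) - 1) = ((Fm i) - 1) * B
    rw [mul_sub, sub_mul, mul_one, one_mul, hcommBF]
  have hfactor : NormedSpace.exp (s • R) =
      NormedSpace.exp (s • B) * NormedSpace.exp (s • ((Fm i) - 1)) := by
    rw [hsplit, Matrix.exp_add_of_commute _ _ hcomm2]
  set E := NormedSpace.exp (s • B) with hE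
  -- entries of E are nonnegative
  have hEnn : ∀ a b, 0 ≤ E a b := by
    intro a b
    apply exp_entry_nonneg' (s • B) (s * ((n : ℝ) - 1))
    intro a b
    have hFidiag : ∀ w, Fm i w w = (0 : ℝ) := fun w => Fm_diag_zero i w
    rcases eq_or_ne a b with rfl | hab
    · have hRaa : R a a = -(n : ℝ) := by
        rw [hR, if_neg (by simp [hammingDist_self]), if_pos rfl]
      have hstep : (s • B) a a = s * (R a a - (Fm i) a a + 1) := by
        simp [hB, Matrix.smul_apply, Matrix.sub_apply, Matrix.add_apply, Matrix.one_apply,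
          smul_eq_mul]
      rw [hstep, hRaa, hFidiag, if_pos rfl]
      nlinarith [hs]
    · have hFiv : (Fm i) a b = if b = flip i a then 1 else 0 := Fm_apply i a b
      have hBab : B a b = R a b - (Fm i) a b := by
        simp [hB, Matrix.sub_apply, Matrix.add_apply, Matrix.one_apply, hab]
      have h1 : 0 ≤ B a b := by
        rw [hBab, hFiv]
        by_cases hfb : b = flip i a
        · rw [if_pos hfb, hR, hfb, hamming_flip_eq_one, if_pos rfl]
          norm_num
        · rw [if_neg hfb, sub_zero]
          exact R_offdiag_nonneg R hR hab
      have hstep : (s • B) a b = s * B a b := rfl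
      rw [hstep, if_neg hab]
      have := mul_nonneg hs.le h1
      linarith
  -- powers of (Fm i)
  have hFsq : (Fm i) ^ 2 = 1 := by rw [pow_two, Fm_mul_Fm]
  have hFpow_even : ∀ k : ℕ, (Fm i) ^ (2 * k) = 1 := fun k => by
    rw [pow_mul, hFsq, one_pow]
  have hFpow_odd : ∀ k : ℕ, (Fm i) ^ (2 * k + 1) = (Fm i) := fun k => by
    rw [pow_succ, hFpow_even, one_mul]
  set c1 := (Real.exp s + Real.exp (-s)) / 2 with hc1
  set c2 := (Real.exp s - Real.exp (-s)) / 2 with hc2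
  have hexpF : NormedSpace.exp (s • (Fm i)) = c1 • 1 + c2 • (Fm i) := by
    have heven : HasSum (fun k : ℕ => (((Nat.factorial (2 * k)) : ℝ))⁻¹ • (s • (Fm i)) ^ (2 * k))
        (c1 • (1 : Matrix (Fin n → Bool) (Fin n → Bool) ℝ)) := by
      have h := (even_odd_exp s).1.smul_const (1 : Matrix (Fin n → Bool) (Fin n → Bool) ℝ)
      have hfun : (fun k : ℕ => (((Nat.factorial (2 * k)) : ℝ))⁻¹ • (s • (Fm i)) ^ (2 * k)) =
          fun k : ℕ => (s ^ (2 * k) / (Nat.factorial (2 * k))) • (1 : Matrix (Fin n → Bool) (Fin n → Bool) ℝ) :=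
        funext fun k => by rw [smul_pow, hFpow_even, smul_smul, div_eq_inv_mul]
      rw [hfun]; exact h
    have hodd : HasSum (fun k : ℕ => (((Nat.factorial (2 * k + 1)) : ℝ))⁻¹ • (s • (Fm i)) ^ (2 * k + 1))
        (c2 • (Fm i)) := by
      have h := (even_odd_exp s).2.smul_const (Fm i)
      have hfun : (fun k : ℕ => (((Nat.factorial (2 * k + 1)) : ℝ))⁻¹ • (s • (Fm i)) ^ (2 * k + 1)) =
          fun k : ℕ => (s ^ (2 * k + 1) / (Nat.factorial (2 * k + 1))) • (Fm i) :=
        funext fun k => by rw [smul_pow, hFpow_odd, smul_smul, div_eq_inv_mul]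
      rw [hfun]; exact h
    exact (exp_hasSum (s • (Fm i))).unique (HasSum.even_add_odd heven hodd)
  have hexpC : NormedSpace.exp (s • ((Fm i) - 1)) =
      (Real.exp (-s) * c1) • 1 + (Real.exp (-s) * c2) • (Fm i) := by
    have h1 : s • ((Fm i) - 1) = s • (Fm i) + (-s) • (1 : Matrix (Fin n → Bool) (Fin n → Bool) ℝ) := by
      rw [smul_sub, neg_smul]; abel
    rw [h1, exp_add_smul_one, hexpF, smul_add, smul_smul, smul_smul]
  -- (Fm i) commutes with E
  have hUnit : IsUnit (Fm i) := ⟨⟨(Fm i), (Fm i), Fm_mul_Fm i, Fm_mul_Fm i⟩, rfl⟩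
  have hFinv : (Fm i)⁻¹ = (Fm i) := Matrix.inv_eq_right_inv (Fm_mul_Fm i)
  have hconj : (Fm i) * (s • B) * (Fm i)⁻¹ = s • B := by
    rw [hFinv, Matrix.mul_smul, Matrix.smul_mul]
    congr 1
    rw [← hcommBF, mul_assoc, Fm_mul_Fm, mul_one]
  have hEFcomm : (Fm i) * E = E * (Fm i) := by
    have h := Matrix.exp_conj (Fm i) (s • B) hUnit
    rw [hconj, hFinv] at h
    calc (Fm i) * E = (Fm i) * ((Fm i) * E * (Fm i)) := by rw [hE, ← h]
      _ = (Fm i) * (Fm i) * E * (Fm i) := by rw [← mul_assoc, ← mul_assoc]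
      _ = E * (Fm i) := by rw [Fm_mul_Fm, one_mul]
  have hEflip : ∀ a b, E (flip i a) b = E a (flip i b) := fun a b => by
    rw [← Fm_mul_apply i E, hEFcomm, mul_Fm_apply]
  set p := Real.exp (-s) * c1 with hp
  set q := Real.exp (-s) * c2 with hqdef
  have hM : ∀ a b, NormedSpace.exp (s • R) a b = p * E a b + q * E a (flip i b) := by
    intro a b
    rw [hfactor, hexpC, mul_add, Matrix.mul_smul, Matrix.mul_smul, mul_one]
    rw [Matrix.add_apply, Matrix.smul_apply, Matrix.smul_apply, mul_Fm_apply]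
    simp [smul_eq_mul]
  -- real coefficient facts
  have hu0 : (0 : ℝ) < Real.exp (-(2 * s)) := Real.exp_pos _
  set u := Real.exp (-(2 * s)) with hu
  have hues : u * Real.exp (2 * s) = 1 := by
    rw [hu, ← Real.exp_add]; norm_num
  have hee : Real.exp (-s) * Real.exp (-s) = u := by
    rw [hu, ← Real.exp_add]; ring_nf
  have hes1 : Real.exp (-s) * Real.exp s = 1 := by
    rw [← Real.exp_add]; norm_num
  have hpu : p = (1 + u) / 2 := by
    rw [hp, hc1, ← mul_div_assoc, mul_add, hes1, hee]
  have hqu : q = (1 - u) / 2 := by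
    rw [hqdef, hc2, ← mul_div_assoc, mul_sub, hes1, hee]
  have key : 2 * s + 1 ≤ Real.exp (2 * s) := by
    have := Real.add_one_le_exp (2 * s)
    linarith
  have hsi : s * s⁻¹ = 1 := mul_inv_cancel₀ hs.ne'
  have hsi0 : 0 ≤ s⁻¹ := inv_nonneg.mpr hs.le
  have hq0 : 0 ≤ q := by
    rw [hqu]
    have : u ≤ 1 := by
      nlinarith [mul_le_mul_of_nonneg_left key hu0.le, Real.exp_pos (2 * s)]
    linarith
  have hqp : q ≤ p := by rw [hqu, hpu]; linarith [hu0.le]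
  have hp0 : 0 ≤ p := le_trans hq0 hqp
  have h3 : p ≤ (1 + s⁻¹) * q := by
    rw [hpu, hqu]
    nlinarith [mul_le_mul_of_nonneg_left key hu0.le, hues, hsi, hs, hu0.le]
  -- put it together
  have hx1 : 0 ≤ E y z := hEnn _ _
  have hx2 : 0 ≤ E y (flip i z) := hEnn _ _
  rw [hM, hM]
  rw [hEflip y z]
  have h4 : E (flip i y) (flip i z) = E y z := by
    rw [hEflip y (flip i z), flip_flip]
  rw [h4]
  nlinarith [mul_le_mul_of_nonneg_right h3 hx2, mul_le_mul_of_nonneg_right hqp hx1,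
    mul_nonneg hp0 hx1, mul_nonneg (mul_nonneg hsi0 hp0) hx1]

end WithR

end ReverseRateAux

open ReverseRateAux

/-- Bound on the total outgoing reverse transition rate for the hypercube CTMC:
`∑_{y' ≠ y} R^←_t(y', y) ≤ n (1 + (T-t)⁻¹) ≤ 2 n max{1, (T-t)⁻¹}`. -/
theorem reverse_rate_bound
    (n : ℕ) (T t : ℝ) (ht0 : 0 ≤ t) (htT : t < T)
    (R : Matrix (Fin n → Bool) (Fin n → Bool) ℝ)
    (hR : ∀ y y' : Fin n → Bool,
      R y y' = if hammingDist y y' = 1 then (1 : ℝ)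
               else if y = y' then -(n : ℝ) else 0)
    (q₀ : (Fin n → Bool) → ℝ)
    (hq₀ : ∀ y, 0 ≤ q₀ y) (hsum : ∑ y, q₀ y = 1)
    (q : ℝ → (Fin n → Bool) → ℝ)
    (hq : ∀ s, q s = (NormedSpace.exp (s • R)).mulVec q₀)
    (Rrev : ℝ → (Fin n → Bool) → (Fin n → Bool) → ℝ)
    (hRrev : ∀ s y' y, Rrev s y' y = R y y' * (q (T - s) y' / q (T - s) y))
    (y : Fin n → Bool) :
    (∑ y' ∈ Finset.univ \ {y}, Rrev t y' y) ≤ n * (1 + (T - t)⁻¹) ∧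
    (n : ℝ) * (1 + (T - t)⁻¹) ≤ 2 * n * max 1 (T - t)⁻¹ := by
  set s := T - t with hsdef
  have hs : 0 < s := sub_pos.mpr htT
  have hsi0 : 0 ≤ s⁻¹ := inv_nonneg.mpr hs.le
  constructor
  · -- main bound
    have hqv : ∀ a, q s a = ∑ z, NormedSpace.exp (s • R) a z * q₀ z := by
      intro a
      rw [hq s]
      simp [Matrix.mulVec, dotProduct]
    have hMnn : ∀ a b, 0 ≤ NormedSpace.exp (s • R) a b := by
      intro a b
      apply exp_entry_nonneg' (s • R) (s * n)
      intro a b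
      rcases eq_or_ne a b with rfl | hab
      · have hRaa : R a a = -(n : ℝ) := by
          rw [hR, if_neg (by simp [hammingDist_self]), if_pos rfl]
        have hstep : (s • R) a a = s * R a a := rfl
        rw [hstep, hRaa, if_pos rfl]
        nlinarith [hs]
      · have hstep : (s • R) a b = s * R a b := rfl
        rw [hstep, if_neg hab]
        have := mul_nonneg hs.le (R_offdiag_nonneg R hR hab)
        linarith
    have hqnn : ∀ a, 0 ≤ q s a := by
      intro a
      rw [hqv]
      exact Finset.sum_nonneg fun z _ => mul_nonneg (hMnn a z) (hq₀ z)
    have hqflip : ∀ (i : Fin n) (a : Fin n → Bool),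
        q s (ReverseRateAux.flip i a) ≤ (1 + s⁻¹) * q s a := by
      intro i a
      rw [hqv, hqv, Finset.mul_sum]
      apply Finset.sum_le_sum
      intro z _
      calc NormedSpace.exp (s • R) (ReverseRateAux.flip i a) z * q₀ z
          ≤ ((1 + s⁻¹) * NormedSpace.exp (s • R) a z) * q₀ z :=
            mul_le_mul_of_nonneg_right (exp_flip_le R hR hs i a z) (hq₀ z)
        _ = (1 + s⁻¹) * (NormedSpace.exp (s • R) a z * q₀ z) := by ring
    have hterm : ∀ y' ∈ Finset.univ \ {y}, Rrev t y' y ≤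
        (if hammingDist y y' = 1 then (1 + s⁻¹) else 0) := by
      intro y' hy'
      have hyne : y' ≠ y := by
        rw [Finset.mem_sdiff, Finset.mem_singleton] at hy'
        exact hy'.2
      rw [hRrev, ← hsdef]
      by_cases hd : hammingDist y y' = 1
      · rw [if_pos hd, hR, if_pos hd, one_mul]
        rcases eq_or_lt_of_le (hqnn y) with h0 | h0
        · rw [← h0, div_zero]
          linarith [hsi0]
        · rw [div_le_iff₀ h0]
          obtain ⟨i, rfl⟩ := eq_flip_of_hamming_one hd
          exact hqflip i y
      · rw [if_neg hd, hR, if_neg hd, if_neg (fun h => hyne h.symm), zero_mul]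
    calc (∑ y' ∈ Finset.univ \ {y}, Rrev t y' y)
        ≤ ∑ y' ∈ Finset.univ \ {y}, (if hammingDist y y' = 1 then (1 + s⁻¹) else 0) :=
          Finset.sum_le_sum hterm
      _ = ∑ y' ∈ (Finset.univ \ {y}).filter (fun y' => hammingDist y y' = 1), (1 + s⁻¹) := by
          rw [Finset.sum_filter]
      _ = ((Finset.univ \ {y}).filter (fun y' => hammingDist y y' = 1)).card * (1 + s⁻¹) := by
          rw [Finset.sum_const, nsmul_eq_mul]
      _ ≤ n * (1 + s⁻¹) := by
          apply mul_le_mul_of_nonneg_right _ (by linarith [hsi0])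
          have hsub : (Finset.univ \ {y}).filter (fun y' => hammingDist y y' = 1) ⊆
              Finset.univ.image (fun i : Fin n => ReverseRateAux.flip i y) := by
            intro y' hy'
            have hd := (Finset.mem_filter.mp hy').2
            obtain ⟨i, rfl⟩ := eq_flip_of_hamming_one hd
            exact Finset.mem_image.mpr ⟨i, Finset.mem_univ i, rfl⟩
          have h1 := Finset.card_le_card hsub
          have h2 := Finset.card_image_le (f := fun i : Fin n => ReverseRateAux.flip i y)
            (s := (Finset.univ : Finset (Fin n)))
          have h3 : (Finset.univ : Finset (Fin n)).card = n := by simp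
          have : ((Finset.univ \ {y}).filter (fun y' => hammingDist y y' = 1)).card ≤ n := by
            omega
          exact_mod_cast this
  · -- trivial bound
    have h1 : (1 : ℝ) ≤ max 1 (T - t)⁻¹ := le_max_left _ _
    have h2 : (T - t)⁻¹ ≤ max 1 (T - t)⁻¹ := le_max_right _ _
    have hn : (0 : ℝ) ≤ n := Nat.cast_nonneg n
    nlinarith
end
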